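/- arXiv:0902.4508 — 4 statements merged into one kernel-verified Lean document; each statement's English description precedes it below -/
import Mathlib

section
/- Suppose d' = d. Then for every pair (α,β) ∈ F_{p^m} × F_q with (α,β) ≠ (0,0), the number of zeros in F_q of the F_{p^d}-linear map φ_{α,β}(x) = α x^{p^m} + β x^{p^k} + β^{p^{n−k}} x^{p^{n−k}} is 1, p^d, or p^{2d} (equivalently, the rank of the associated quadratic form x ↦ Tr^m_d(α x^{p^m+1}) + Tr^n_d(β x^{p^k+1}) over F_{p^d} is s, s−1, or s−2). -/
open scoped BigOperators Classical

noncomputable section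

/-- The map `φ_{α,β}(x) = α x^{p^m} + β x^{p^k} + β^{p^{n-k}} x^{p^{n-k}}`. -/
def phiMap (p m n k : ℕ) {F : Type} [Field F] (α β x : F) : F :=
  α * x ^ p ^ m + β * x ^ p ^ k + β ^ p ^ (n - k) * x ^ p ^ (n - k)

/-- The trace-type sum `x ↦ ∑_{i<r} x^{p^{t i}}`; for `x` in the subfield of size
`p^{t·r}` this is the relative trace down to the subfield of size `p^t`. -/
def trSum (p t r : ℕ) {F : Type} [Field F] (x : F) : F :=
  ∑ i ∈ Finset.range r, x ^ p ^ (t * i)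

/-- `ζ_p^c = exp(2πi·c̃/p)` for a lift `c̃` of `c : F_p`. -/
noncomputable def expChar (p : ℕ) (c : ZMod p) : ℂ :=
  Complex.exp (2 * Real.pi * Complex.I * (c.val : ℂ) / (p : ℂ))

/-- Identify an element of the prime field of `F` with an element of `ZMod p`
(the partial inverse of the algebra map). -/
noncomputable def fToZMod (p : ℕ) {F : Type} [Field F] [Algebra (ZMod p) F] (x : F) : ZMod p :=
  letI : Nonempty (ZMod p) := ⟨0⟩
  Function.invFun (algebraMap (ZMod p) F) x

/-- `T(α,β) = ∑_{x ∈ F_q} ζ_p^{Tr^m_1(α x^{p^m+1}) + Tr^n_1(β x^{p^k+1})}`. -/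
noncomputable def Tsum (p m n k : ℕ) (F : Type) [Field F] [Fintype F] [Algebra (ZMod p) F]
    (α β : F) : ℂ :=
  ∑ x : F, expChar p (fToZMod p (trSum p 1 m (α * x ^ (p ^ m + 1))) +
      fToZMod p (trSum p 1 n (β * x ^ (p ^ k + 1))))

/-- `S(α,β,γ) = ∑_{x ∈ F_q} ζ_p^{Tr^m_1(α x^{p^m+1}) + Tr^n_1(β x^{p^k+1} + γ x)}`. -/
noncomputable def Ssum (p m n k : ℕ) (F : Type) [Field F] [Fintype F] [Algebra (ZMod p) F]
    (α β γ : F) : ℂ :=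
  ∑ x : F, expChar p (fToZMod p (trSum p 1 m (α * x ^ (p ^ m + 1))) +
      fToZMod p (trSum p 1 n (β * x ^ (p ^ k + 1) + γ * x)))

/-- `√(q₀*)` where `q₀* = (−1)^{(q₀−1)/2} q₀`. -/
noncomputable def sqrtStar (q0 : ℕ) : ℂ :=
  if q0 % 4 = 1 then (Real.sqrt q0 : ℂ) else Complex.I * (Real.sqrt q0 : ℂ)

/-- `ζ_p = exp(2πi/p)`. -/
noncomputable def zetaC (p : ℕ) : ℂ := Complex.exp (2 * Real.pi * Complex.I / (p : ℂ))

/-- Number of pairs `(α,β) ∈ F_{p^m} × F_q` with `T(α,β) = v`. -/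
noncomputable def Tcount (p m n k : ℕ) (F : Type) [Field F] [Fintype F] [Algebra (ZMod p) F]
    (v : ℂ) : ℕ :=
  Nat.card {ab : F × F // ab.1 ^ p ^ m = ab.1 ∧ Tsum p m n k F ab.1 ab.2 = v}

/-- Number of triples `(α,β,γ) ∈ F_{p^m} × F_q × F_q` with `S(α,β,γ) = v`. -/
noncomputable def Scount (p m n k : ℕ) (F : Type) [Field F] [Fintype F] [Algebra (ZMod p) F]
    (v : ℂ) : ℕ :=
  Nat.card {abc : F × F × F // abc.1 ^ p ^ m = abc.1 ∧ Ssum p m n k F abc.1 abc.2.1 abc.2.2 = v}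

/-- Hamming weight of the codeword of `C₁` attached to `(α,β)`:
the number of `0 ≤ i ≤ q-2` with `Tr^m_t(α π^{i(p^m+1)}) + Tr^n_t(β π^{i(p^k+1)}) ≠ 0`. -/
noncomputable def wt1 (p m n k t : ℕ) {F : Type} [Field F] (π α β : F) : ℕ :=
  Nat.card {i : ℕ // i ≤ p ^ n - 2 ∧
    trSum p t (m / t) (α * π ^ (i * (p ^ m + 1))) +
    trSum p t (n / t) (β * π ^ (i * (p ^ k + 1))) ≠ 0}

/-- Number of pairs `(α,β) ∈ F_{p^m} × F_q` whose `C₁`-codeword has weight `v`. -/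
noncomputable def wt1count (p m n k t : ℕ) (F : Type) [Field F] [Fintype F] (π : F) (v : ℕ) : ℕ :=
  Nat.card {ab : F × F // ab.1 ^ p ^ m = ab.1 ∧ wt1 p m n k t π ab.1 ab.2 = v}

/-- Hamming weight of the codeword of `C₂` attached to `(α,β,γ)`. -/
noncomputable def wt2 (p m n k t : ℕ) {F : Type} [Field F] (π α β γ : F) : ℕ :=
  Nat.card {i : ℕ // i ≤ p ^ n - 2 ∧
    trSum p t (m / t) (α * π ^ (i * (p ^ m + 1))) +
    trSum p t (n / t) (β * π ^ (i * (p ^ k + 1)) + γ * π ^ i) ≠ 0}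

/-- Number of triples `(α,β,γ)` whose `C₂`-codeword has weight `v`. -/
noncomputable def wt2count (p m n k t : ℕ) (F : Type) [Field F] [Fintype F] (π : F) (v : ℕ) : ℕ :=
  Nat.card {abc : F × F × F // abc.1 ^ p ^ m = abc.1 ∧ wt2 p m n k t π abc.1 abc.2.1 abc.2.2 = v}

section AuxLemmas

variable {F : Type} [Field F]

lemma fixMul (p : ℕ) (x : F) (a : ℕ) (h : x ^ p ^ a = x) : ∀ c, x ^ p ^ (a * c) = x := by
  intro c
  induction c with
  | zero => simp
  | succ c ih =>
    have : p ^ (a * (c + 1)) = p ^ (a * c) * p ^ a := by rw [← pow_add]; ring_nf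
    rw [this, pow_mul, ih, h]

lemma fixGcd (p : ℕ) (x : F) : ∀ a b : ℕ, x ^ p ^ a = x → x ^ p ^ b = x →
    x ^ p ^ Nat.gcd a b = x := by
  intro a
  induction a using Nat.strong_induction_on with
  | _ a ih =>
    intro b ha hb
    rcases Nat.eq_zero_or_pos a with h0 | hpos
    · subst h0; simpa using hb
    · rw [Nat.gcd_rec]
      apply ih (b % a) (Nat.mod_lt b hpos) a _ ha
      have h1 : x ^ p ^ (a * (b / a)) = x := fixMul p x a ha _
      have h2 : x ^ p ^ b = (x ^ p ^ (a * (b / a))) ^ p ^ (b % a) := by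
        rw [← pow_mul, ← pow_add, Nat.div_add_mod]
      rw [h1] at h2
      rw [← h2, hb]

lemma card_fixed_set [Fintype F] (p n d : ℕ) (hp : p.Prime) (hF : Fintype.card F = p ^ n)
    (hn : 0 < n) (hdn : d ∣ n) (hd : 0 < d) :
    ({c : F | c ^ p ^ d = c}).ncard = p ^ d := by
  classical
  have hpd1 : 1 < p ^ d := Nat.one_lt_pow hd.ne' hp.one_lt
  have hpn1 : 1 < p ^ n := Nat.one_lt_pow hn.ne' hp.one_lt
  -- upper bound via roots of a polynomial
  set f : Polynomial F := Polynomial.X ^ (p ^ d) - Polynomial.X with hf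
  have hfdeg : f.natDegree = p ^ d := by
    have h1 : (Polynomial.X : Polynomial F).natDegree < (Polynomial.X ^ (p ^ d) : Polynomial F).natDegree := by
      simpa using hpd1
    rw [hf, Polynomial.natDegree_sub_eq_left_of_natDegree_lt h1, Polynomial.natDegree_X_pow]
  have hf0 : f ≠ 0 := by
    intro h
    rw [h, Polynomial.natDegree_zero] at hfdeg
    omega
  have hle : ({c : F | c ^ p ^ d = c}).ncard ≤ p ^ d := by
    have hsub : {c : F | c ^ p ^ d = c} ⊆ ↑f.roots.toFinset := by
      intro c hc
      simp only [Set.mem_setOf_eq] at hc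
      simp only [Finset.coe_sort_coe, Multiset.mem_toFinset, Finset.mem_coe]
      rw [Polynomial.mem_roots hf0]
      simp [hf, Polynomial.IsRoot, sub_eq_zero, hc]
    calc ({c : F | c ^ p ^ d = c}).ncard ≤ (↑f.roots.toFinset : Set F).ncard :=
          Set.ncard_le_ncard hsub (Set.toFinite _)
      _ = f.roots.toFinset.card := Set.ncard_coe_finset _
      _ ≤ Multiset.card f.roots := Multiset.toFinset_card_le _
      _ ≤ f.natDegree := Polynomial.card_roots' f
      _ = p ^ d := hfdeg
  -- lower bound via the cyclic group of units
  obtain ⟨g, hg⟩ := IsCyclic.exists_generator (α := Fˣ)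
  have hcardU : Fintype.card Fˣ = p ^ n - 1 := by
    rw [Fintype.card_units (α := F), hF]
  have hgord : orderOf g = p ^ n - 1 := by
    rw [orderOf_eq_card_of_forall_mem_zpowers hg, Nat.card_eq_fintype_card, hcardU]
  have hdvd : p ^ d - 1 ∣ p ^ n - 1 := by
    obtain ⟨s', rfl⟩ := hdn
    rw [pow_mul]
    simpa using Nat.sub_dvd_pow_sub_pow (p ^ d) 1 s'
  set t := (p ^ n - 1) / (p ^ d - 1) with hts
  have ht : (p ^ d - 1) * t = p ^ n - 1 := Nat.mul_div_cancel' hdvd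
  have htpos : 0 < t := by
    rcases Nat.eq_zero_or_pos t with h | h
    · rw [h, mul_zero] at ht; omega
    · exact h
  have hordh : orderOf (g ^ t) = p ^ d - 1 := by
    rw [orderOf_pow g, hgord, Nat.gcd_eq_right ⟨p ^ d - 1, by rw [mul_comm]; exact ht.symm⟩,
      ← ht, Nat.mul_div_cancel _ htpos]
  set S : Set F := insert (0 : F) ((fun u : Fˣ => (u : F)) '' ↑(Subgroup.zpowers (g ^ t))) with hS
  have hSsub : S ⊆ {c : F | c ^ p ^ d = c} := by
    intro c hc
    rcases Set.mem_insert_iff.mp hc with rfl | ⟨u, hu, rfl⟩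
    · simp only [Set.mem_setOf_eq]
      exact zero_pow (by positivity)
    · simp only [Set.mem_setOf_eq]
      have h1 : u ^ (p ^ d - 1) = 1 :=
        orderOf_dvd_iff_pow_eq_one.mp (hordh ▸ orderOf_dvd_of_mem_zpowers hu)
      have h2 : (u : F) ^ (p ^ d - 1) = 1 := by
        rw [← Units.val_pow_eq_pow_val, h1, Units.val_one]
      calc (u : F) ^ p ^ d = (u : F) ^ (p ^ d - 1 + 1) := by rw [Nat.sub_add_cancel (by omega)]
        _ = (u : F) ^ (p ^ d - 1) * u := pow_succ _ _
        _ = u := by rw [h2, one_mul]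
  have hScard : S.ncard = p ^ d := by
    have h0 : (0 : F) ∉ (fun u : Fˣ => (u : F)) '' ↑(Subgroup.zpowers (g ^ t)) := by
      rintro ⟨u, _, hu⟩
      exact u.ne_zero hu
    rw [hS, Set.ncard_insert_of_notMem h0 (Set.toFinite _),
      Set.ncard_image_of_injective _ Units.val_injective]
    have h1 : (↑(Subgroup.zpowers (g ^ t)) : Set Fˣ).ncard = orderOf (g ^ t) := by
      rw [← Nat.card_coe_set_eq]
      exact Nat.card_zpowers _
    rw [h1, hordh]
    omega
  have hge : p ^ d ≤ ({c : F | c ^ p ^ d = c}).ncard := by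
    calc p ^ d = S.ncard := hScard.symm
      _ ≤ ({c : F | c ^ p ^ d = c}).ncard := Set.ncard_le_ncard hSsub (Set.toFinite _)
  omega

end AuxLemmas

theorem stmt0 (p m k n d d' s : ℕ) (hp : Nat.Prime p) (hodd : p % 2 = 1)
    (hm : 0 < m) (hn : n = 2 * m) (hk : k ≤ n - 1) (hkm : k ≠ m)
    (hd : d = Nat.gcd m k) (hd' : d' = Nat.gcd (m + k) (2 * k)) (hs : s = n / d)
    (F : Type) [Field F] [Fintype F] [Algebra (ZMod p) F] (hF : Fintype.card F = p ^ n)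
    (hcase : d' = d)
    (α β : F) (hα : α ^ p ^ m = α) (hne : ¬(α = 0 ∧ β = 0)) :
    Nat.card {x : F // phiMap p m n k α β x = 0} = 1 ∨
    Nat.card {x : F // phiMap p m n k α β x = 0} = p ^ d ∨
    Nat.card {x : F // phiMap p m n k α β x = 0} = p ^ (2 * d) := by
  classical
  haveI := Fact.mk hp
  haveI : CharP F p := charP_of_injective_algebraMap (algebraMap (ZMod p) F).injective p
  have hpd : ∀ (x y : F) (a : ℕ), (x + y) ^ p ^ a = x ^ p ^ a + y ^ p ^ a :=
    fun x y a => add_pow_char_pow x y p a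
  have hsd : ∀ (x y : F) (a : ℕ), (x - y) ^ p ^ a = x ^ p ^ a - y ^ p ^ a :=
    fun x y a => sub_pow_char_pow x y a (p := p)
  have hq : ∀ z : F, z ^ p ^ n = z := fun z => by rw [← hF]; exact FiniteField.pow_card z
  have hmn : 0 < n := by omega
  have hd_m : d ∣ m := hd ▸ Nat.gcd_dvd_left m k
  have hd_k : d ∣ k := hd ▸ Nat.gcd_dvd_right m k
  have hd_n : d ∣ n := by rw [hn]; exact Dvd.dvd.mul_left hd_m 2
  have hdpos : 0 < d := hd ▸ Nat.gcd_pos_of_pos_left k hm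
  have hkn : k ≤ n := by omega
  have hd_nk : d ∣ n - k := Nat.dvd_sub hd_n hd_k
  have hppos : ∀ j : ℕ, p ^ j ≠ 0 := fun j => (pow_pos hp.pos j).ne'
  have hgmk : Nat.gcd (m + k) n = d := by
    have h1 : Nat.gcd (m + k) n = Nat.gcd (m + k) (2 * k) := by
      apply Nat.dvd_antisymm
      · apply Nat.dvd_gcd (Nat.gcd_dvd_left _ _)
        have h2 : Nat.gcd (m + k) n ∣ 2 * (m + k) := Dvd.dvd.mul_left (Nat.gcd_dvd_left _ _) 2
        have h3 := Nat.dvd_sub h2 (Nat.gcd_dvd_right (m + k) n)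
        have h4 : 2 * (m + k) - n = 2 * k := by omega
        rwa [h4] at h3
      · apply Nat.dvd_gcd (Nat.gcd_dvd_left _ _)
        have h2 : Nat.gcd (m + k) (2 * k) ∣ 2 * (m + k) := Dvd.dvd.mul_left (Nat.gcd_dvd_left _ _) 2
        have h3 := Nat.dvd_sub h2 (Nat.gcd_dvd_right (m + k) (2 * k))
        have h4 : 2 * (m + k) - 2 * k = n := by omega
        rwa [h4] at h3
    rw [h1, ← hd', hcase]
  set E : Set F := {c : F | c ^ p ^ d = c} with hEdef
  have hEcard : E.ncard = p ^ d := card_fixed_set p n d hp hF hmn hd_n hdpos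
  have hEfix : ∀ c ∈ E, ∀ j, d ∣ j → c ^ p ^ j = c := by
    intro c hc j hj
    obtain ⟨t, rfl⟩ := hj
    exact fixMul p c d hc t
  have hEsub : ∀ a ∈ E, ∀ b ∈ E, a - b ∈ E := by
    intro a ha b hb
    simp only [hEdef, Set.mem_setOf_eq] at *
    rw [hsd, ha, hb]
  have hEdiv : ∀ a ∈ E, ∀ b ∈ E, a / b ∈ E := by
    intro a ha b hb
    simp only [hEdef, Set.mem_setOf_eq] at *
    rw [div_pow, ha, hb]
  set K : Set F := {x : F | phiMap p m n k α β x = 0} with hKdef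
  have hcard : Nat.card {x : F // phiMap p m n k α β x = 0} = K.ncard :=
    Nat.card_coe_set_eq K
  rw [hcard]
  have h0K : (0 : F) ∈ K := by
    simp [hKdef, phiMap, zero_pow (hppos m), zero_pow (hppos k), zero_pow (hppos (n - k))]
  have hKadd : ∀ a ∈ K, ∀ b ∈ K, a + b ∈ K := by
    intro a ha b hb
    simp only [hKdef, Set.mem_setOf_eq, phiMap] at *
    rw [hpd a b m, hpd a b k, hpd a b (n - k)]
    linear_combination ha + hb
  have hKsmul : ∀ c ∈ E, ∀ a ∈ K, c * a ∈ K := by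
    intro c hc a ha
    simp only [hKdef, Set.mem_setOf_eq, phiMap] at ha ⊢
    rw [mul_pow c a, mul_pow c a, mul_pow c a, hEfix c hc m hd_m, hEfix c hc k hd_k,
      hEfix c hc (n - k) hd_nk]
    linear_combination c * ha
  by_cases hK0 : ∀ y ∈ K, y = 0
  · left
    have hK1 : K = {0} := Set.eq_singleton_iff_unique_mem.mpr ⟨h0K, hK0⟩
    rw [hK1, Set.ncard_singleton]
  · push_neg at hK0
    obtain ⟨x, hxK, hx0⟩ := hK0
    have hβ : β ≠ 0 := by
      rintro rfl
      have hα0 : α ≠ 0 := fun h => hne ⟨h, rfl⟩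
      have h1 : phiMap p m n k α 0 x = 0 := hxK
      simp only [phiMap, zero_mul, add_zero, zero_pow (hppos (n - k))] at h1
      exact hx0 (pow_eq_zero_iff (hppos m) |>.mp ((mul_eq_zero.mp h1).resolve_left hα0))
    have hrel : ∀ y ∈ K, α ^ p ^ k * y ^ p ^ (m + k) + β ^ p ^ k * y ^ p ^ (2 * k) + β * y = 0 := by
      intro y hy
      have hy' : α * y ^ p ^ m + β * y ^ p ^ k + β ^ p ^ (n - k) * y ^ p ^ (n - k) = 0 := hy
      have h2 := congrArg (fun z : F => z ^ p ^ k) hy'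
      rw [hpd (α * y ^ p ^ m + β * y ^ p ^ k) (β ^ p ^ (n - k) * y ^ p ^ (n - k)) k,
        hpd (α * y ^ p ^ m) (β * y ^ p ^ k) k, mul_pow, mul_pow, mul_pow,
        zero_pow (hppos k)] at h2
      have e1 : (y ^ p ^ m) ^ p ^ k = y ^ p ^ (m + k) := by rw [← pow_mul, ← pow_add]
      have e2 : (y ^ p ^ k) ^ p ^ k = y ^ p ^ (2 * k) := by rw [← pow_mul, ← pow_add, two_mul]
      have e3 : (β ^ p ^ (n - k)) ^ p ^ k = β := by
        rw [← pow_mul, ← pow_add, Nat.sub_add_cancel hkn, hq]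
      have e4 : (y ^ p ^ (n - k)) ^ p ^ k = y := by
        rw [← pow_mul, ← pow_add, Nat.sub_add_cancel hkn, hq]
      rw [e1, e2, e3, e4] at h2
      exact h2
    set Psi : F → F := fun y => (y * x⁻¹) ^ p ^ (m + k) - y * x⁻¹ with hPsidef
    have hfib : ∀ y1 y2 : F, Psi y1 = Psi y2 → (y1 - y2) * x⁻¹ ∈ E := by
      intro y1 y2 h12
      have hu : (y1 - y2) * x⁻¹ = y1 * x⁻¹ - y2 * x⁻¹ := by ring
      have h4 : ((y1 - y2) * x⁻¹) ^ p ^ (m + k) = (y1 - y2) * x⁻¹ := by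
        rw [hu, hsd]
        simp only [hPsidef] at h12
        linear_combination h12
      have h6 := fixGcd p ((y1 - y2) * x⁻¹) (m + k) n h4 (hq _)
      rw [hgmk] at h6
      exact h6
    set A : F := α ^ p ^ k * x ^ p ^ (m + k) with hA
    set B : F := β ^ p ^ k * x ^ p ^ (2 * k) with hB
    have hBne : B ≠ 0 := mul_ne_zero (pow_ne_zero _ hβ) (pow_ne_zero _ hx0)
    have hkey : ∀ y ∈ K, B * (Psi y) ^ p ^ (m + k) = (-(A + B)) * Psi y := by
      intro y hy
      have e1 := hrel y hy
      have e2 := hrel x hxK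
      set u : F := y * x⁻¹ with hudef
      have hu3 : u * x = y := by
        rw [hudef, mul_assoc, inv_mul_cancel₀ hx0, mul_one]
      have hu1 : u ^ p ^ (m + k) * x ^ p ^ (m + k) = y ^ p ^ (m + k) := by
        rw [← mul_pow, hu3]
      have hu2 : u ^ p ^ (2 * k) * x ^ p ^ (2 * k) = y ^ p ^ (2 * k) := by
        rw [← mul_pow, hu3]
      have e4 : (u ^ p ^ (m + k)) ^ p ^ (m + k) = u ^ p ^ (2 * k) := by
        have h5 : (m + k) + (m + k) = 2 * k + n := by omega
        rw [← pow_mul, ← pow_add, h5, pow_add, pow_mul]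
        exact hq (u ^ p ^ (2 * k))
      have e5 : (Psi y) ^ p ^ (m + k) = u ^ p ^ (2 * k) - u ^ p ^ (m + k) := by
        simp only [hPsidef, ← hudef]
        rw [hsd, e4]
      rw [e5]
      simp only [hPsidef, ← hudef, hA, hB]
      linear_combination e1 - u * e2 + α ^ p ^ k * hu1 + β ^ p ^ k * hu2 + β * hu3
    have hW : ∀ w w0 : F, w0 ≠ 0 → B * w ^ p ^ (m + k) = (-(A + B)) * w →
        B * w0 ^ p ^ (m + k) = (-(A + B)) * w0 → w * w0⁻¹ ∈ E := by
      intro w w0 hw0 hw hww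
      have h1 : w ^ p ^ (m + k) * w0 = w * w0 ^ p ^ (m + k) := by
        apply mul_left_cancel₀ hBne
        linear_combination w0 * hw - w * hww
      have hw0σ : w0 ^ p ^ (m + k) ≠ 0 := pow_ne_zero _ hw0
      have h2 : (w * w0⁻¹) ^ p ^ (m + k) = w * w0⁻¹ := by
        rw [← div_eq_mul_inv, div_pow, div_eq_div_iff hw0σ hw0]
        linear_combination h1
      have h3 := fixGcd p (w * w0⁻¹) (m + k) n h2 (hq _)
      rwa [hgmk] at h3
    have hub : K.ncard ≤ p ^ d * p ^ d := by
      by_cases him : ∀ y ∈ K, Psi y = 0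
      · have h1 : K.ncard ≤ E.ncard := by
          apply Set.ncard_le_ncard_of_injOn (fun y => (y - x) * x⁻¹)
          · intro a ha
            exact hfib a x (by rw [him a ha, him x hxK])
          · intro a _ b _ hab
            simp only at hab
            have := mul_right_cancel₀ (inv_ne_zero hx0) hab
            exact sub_left_inj.mp this
        have h2 : 1 ≤ p ^ d := Nat.one_le_iff_ne_zero.mpr (hppos d)
        calc K.ncard ≤ E.ncard := h1
          _ = p ^ d := hEcard
          _ ≤ p ^ d * p ^ d := Nat.le_mul_of_pos_left _ (by positivity)
      · push_neg at him
        obtain ⟨y0, hy0K, hw0⟩ := him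
        set pick : F → F := fun w => if h : ∃ y, y ∈ K ∧ Psi y = w then h.choose else 0 with hpick
        have hpickspec : ∀ y ∈ K, pick (Psi y) ∈ K ∧ Psi (pick (Psi y)) = Psi y := by
          intro y hy
          have hex : ∃ y', y' ∈ K ∧ Psi y' = Psi y := ⟨y, hy, rfl⟩
          simp only [hpick, dif_pos hex]
          exact hex.choose_spec
        have hmaps : ∀ y ∈ K, ((Psi y) * (Psi y0)⁻¹, (y - pick (Psi y)) * x⁻¹) ∈ E ×ˢ E := by
          intro y hy
          refine Set.mem_prod.mpr ⟨?_, ?_⟩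
          · exact hW (Psi y) (Psi y0) hw0 (hkey y hy) (hkey y0 hy0K)
          · exact hfib y (pick (Psi y)) ((hpickspec y hy).2.symm)
        have hinj : Set.InjOn (fun y => ((Psi y) * (Psi y0)⁻¹, (y - pick (Psi y)) * x⁻¹)) K := by
          intro a ha b hb hab
          simp only [Prod.mk.injEq] at hab
          have h1 : Psi a = Psi b := mul_right_cancel₀ (inv_ne_zero hw0) hab.1
          have h2 := hab.2
          rw [h1] at h2
          have h3 := mul_right_cancel₀ (inv_ne_zero hx0) h2
          exact sub_left_inj.mp h3
        have h4 := Set.ncard_le_ncard_of_injOn _ hmaps hinj (Set.toFinite _)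
        have h5 : (E ×ˢ E).ncard = p ^ d * p ^ d := by
          rw [← Nat.card_coe_set_eq, Nat.card_congr (Equiv.Set.prod E E), Nat.card_prod,
            Nat.card_coe_set_eq, hEcard]
        calc K.ncard ≤ (E ×ˢ E).ncard := h4
          _ = p ^ d * p ^ d := h5
    by_cases hsub2 : K ⊆ (fun c => x * c) '' E
    · right; left
      have hsup : (fun c => x * c) '' E ⊆ K := by
        rintro _ ⟨c, hc, rfl⟩
        show x * c ∈ K
        rw [mul_comm]
        exact hKsmul c hc x hxK
      have hKE : K = (fun c => x * c) '' E := Set.Subset.antisymm hsub2 hsup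
      rw [hKE, Set.ncard_image_of_injective _ (mul_right_injective₀ hx0), hEcard]
    · right; right
      obtain ⟨z, hzK, hz⟩ := Set.not_subset.mp hsub2
      have hlow : p ^ d * p ^ d ≤ K.ncard := by
        have hmaps : ∀ ab ∈ E ×ˢ E, (fun ab : F × F => ab.1 * x + ab.2 * z) ab ∈ K := by
          rintro ⟨a, b⟩ hab
          obtain ⟨ha, hb⟩ := Set.mem_prod.mp hab
          exact hKadd _ (hKsmul a ha x hxK) _ (hKsmul b hb z hzK)
        have hinj : Set.InjOn (fun ab : F × F => ab.1 * x + ab.2 * z) (E ×ˢ E) := by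
          rintro ⟨a, b⟩ hab ⟨a', b'⟩ hab'
          obtain ⟨ha, hb⟩ := Set.mem_prod.mp hab
          obtain ⟨ha', hb'⟩ := Set.mem_prod.mp hab'
          intro heq
          simp only at heq
          by_cases hbb : b = b'
          · subst hbb
            have h1 : a * x = a' * x := by linear_combination heq
            have h2 : a = a' := mul_right_cancel₀ hx0 h1
            simp [h2]
          · exfalso
            have hbb' : b' - b ≠ 0 := sub_ne_zero.mpr (Ne.symm hbb)
            have hz' : z = x * ((a - a') / (b' - b)) := by
              have h9 : z * (b' - b) = x * (a - a') := by linear_combination -heq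
              rw [← mul_div_assoc, eq_div_iff hbb']
              exact h9
            exact hz ⟨(a - a') / (b' - b), hEdiv _ (hEsub a ha a' ha') _ (hEsub b' hb' b hb),
              hz'.symm⟩
        have h4 := Set.ncard_le_ncard_of_injOn _ hmaps hinj (Set.toFinite K)
        have h5 : (E ×ˢ E).ncard = p ^ d * p ^ d := by
          rw [← Nat.card_coe_set_eq, Nat.card_congr (Equiv.Set.prod E E), Nat.card_prod,
            Nat.card_coe_set_eq, hEcard]
        calc p ^ d * p ^ d = (E ×ˢ E).ncard := h5.symm
          _ ≤ K.ncard := h4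
      have heq : K.ncard = p ^ d * p ^ d := le_antisymm hub hlow
      rw [heq, two_mul, pow_add]
end
end

section
/- Suppose d' = 2d. Then for every pair (α,β) ∈ F_{p^m} × F_q with (α,β) ≠ (0,0), the number of zeros in F_q of the F_{p^d}-linear map φ_{α,β}(x) = α x^{p^m} + β x^{p^k} + β^{p^{n−k}} x^{p^{n−k}} is 1, p^{2d}, or p^{4d} (equivalently, the rank of the associated quadratic form x ↦ Tr^m_d(α x^{p^m+1}) + Tr^n_d(β x^{p^k+1}) over F_{p^d} is s, s−2, or s−4). -/
open scoped BigOperators Classical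

noncomputable section

section AuxLemmas

open Finset Polynomial

variable {F : Type} [Field F]

private lemma fixPowMul (p a l : ℕ) (x : F) (h : x ^ p ^ a = x) : x ^ p ^ (a * l) = x := by
  induction l with
  | zero => simp
  | succ l ih => rw [Nat.mul_succ, pow_add, pow_mul, ih, h]

private lemma fixPowGcd (p : ℕ) (x : F) : ∀ a, ∀ b, x ^ p ^ a = x → x ^ p ^ b = x →
    x ^ p ^ (Nat.gcd a b) = x := by
  intro a
  induction a using Nat.strong_induction_on with
  | _ a ih =>
    intro b ha hb
    match a, ha with
    | 0, _ => simpa using hb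
    | (a+1), ha =>
      rw [Nat.gcd_rec]
      have h2 : x ^ p ^ ((a+1) * (b / (a+1)) + b % (a+1)) = x := by
        rw [Nat.div_add_mod]; exact hb
      rw [pow_add, pow_mul, fixPowMul p (a+1) (b/(a+1)) x ha] at h2
      exact ih (b % (a+1)) (Nat.mod_lt _ (Nat.succ_pos a)) (a+1) h2 ha

private lemma fixCongr (p r a b : ℕ) (x : F) (h : x ^ p ^ r = x) (hab : a % r = b % r) :
    x ^ p ^ a = x ^ p ^ b := by
  have key : ∀ c : ℕ, x ^ p ^ c = x ^ p ^ (c % r) := by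
    intro c
    conv_lhs => rw [← Nat.div_add_mod c r]
    rw [pow_add, pow_mul, fixPowMul p r (c / r) x h]
  rw [key a, key b, hab]

private lemma cardPowEqLe [Fintype F] (t : ℕ) (ht : 0 < t) (c : F) :
    (Finset.univ.filter fun x : F => x ^ t = c).card ≤ t := by
  classical
  have hsub : (Finset.univ.filter fun x : F => x ^ t = c) ⊆ (X ^ t - C c).roots.toFinset := by
    intro x hx
    simp only [mem_filter, mem_univ, true_and] at hx
    rw [Multiset.mem_toFinset, mem_roots (X_pow_sub_C_ne_zero ht c)]
    simp [IsRoot, hx]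
  calc (Finset.univ.filter fun x : F => x ^ t = c).card
      ≤ (X ^ t - C c).roots.toFinset.card := Finset.card_le_card hsub
    _ ≤ Multiset.card (X ^ t - C c).roots := Multiset.toFinset_card_le _
    _ ≤ (X ^ t - C c).natDegree := card_roots' _
    _ = t := natDegree_X_pow_sub_C

private lemma cardFixLe [Fintype F] (p g : ℕ) (hp : 1 < p) (hg : 0 < g) :
    (Finset.univ.filter fun x : F => x ^ p ^ g = x).card ≤ p ^ g := by
  classical
  have hne : (X ^ p ^ g - X : F[X]) ≠ 0 :=
    FiniteField.X_pow_card_pow_sub_X_ne_zero F hg.ne' hp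
  have hsub : (Finset.univ.filter fun x : F => x ^ p ^ g = x) ⊆
      (X ^ p ^ g - X : F[X]).roots.toFinset := by
    intro x hx
    simp only [mem_filter, mem_univ, true_and] at hx
    rw [Multiset.mem_toFinset, mem_roots hne]
    simp [IsRoot, hx]
  calc (Finset.univ.filter fun x : F => x ^ p ^ g = x).card
      ≤ _ := Finset.card_le_card hsub
    _ ≤ Multiset.card (X ^ p ^ g - X : F[X]).roots := Multiset.toFinset_card_le _
    _ ≤ (X ^ p ^ g - X : F[X]).natDegree := card_roots' _
    _ = p ^ g := FiniteField.X_pow_card_pow_sub_X_natDegree_eq F hg.ne' hp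

private lemma cardFixEq [Fintype F] (p n r : ℕ) (hp : 1 < p) (hF : Fintype.card F = p ^ n)
    (hr : 0 < r) (hrn : r ∣ n) :
    (Finset.univ.filter fun x : F => x ^ p ^ r = x).card = p ^ r := by
  classical
  have hq1 : 1 < Fintype.card F := Fintype.one_lt_card
  have hn0 : n ≠ 0 := by rintro rfl; exact absurd (hF ▸ hq1) (by simp)
  have hg0 : (X ^ p ^ n - X : F[X]) ≠ 0 := FiniteField.X_pow_card_pow_sub_X_ne_zero F hn0 hp
  have hdvd : (X ^ p ^ r - X : F[X]) ∣ (X ^ p ^ n - X) := by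
    obtain ⟨c, hc⟩ := hrn
    have h1 : (p ^ r - 1) ∣ (p ^ n - 1) := by
      have := Nat.sub_dvd_pow_sub_pow (p ^ r) 1 c
      simpa [← pow_mul, ← hc] using this
    obtain ⟨u, hu⟩ := h1
    have hsplit : ∀ a : ℕ, 0 < a → (X ^ a - X : F[X]) = (X ^ (a - 1) - 1) * X := by
      intro a ha
      obtain ⟨b, rfl⟩ := Nat.exists_eq_add_of_lt ha
      simp only [Nat.zero_add, Nat.add_sub_cancel, pow_succ]
      ring
    have hfr := hsplit (p ^ r) (by positivity)
    have hfn := hsplit (p ^ n) (by positivity)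
    rw [hfr, hfn, hu, pow_mul]
    exact mul_dvd_mul_right (by simpa using sub_dvd_pow_sub_pow (X ^ (p^r-1) : F[X]) 1 u) X
  have hgsplits : ((X : F[X]) ^ p ^ n - X).Splits := by
    rw [splits_iff_card_roots]
    rw [show ((X : F[X]) ^ p ^ n - X) = X ^ Fintype.card F - X by rw [hF]]
    rw [FiniteField.roots_X_pow_card_sub_X]
    rw [FiniteField.X_pow_card_sub_X_natDegree_eq F hq1]
    simp [hF]
  have hfsplits := Splits.of_dvd hgsplits hg0 hdvd
  have hcard : Multiset.card (X ^ p ^ r - X : F[X]).roots = p ^ r := by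
    rw [splits_iff_card_roots.mp hfsplits]
    exact FiniteField.X_pow_card_pow_sub_X_natDegree_eq F hr.ne' hp
  have hnodup : (X ^ p ^ r - X : F[X]).roots.Nodup := by
    have hle := roots.le_of_dvd hg0 hdvd
    have hnd : (X ^ p ^ n - X : F[X]).roots.Nodup := by
      rw [show ((X : F[X]) ^ p ^ n - X) = X ^ Fintype.card F - X by rw [hF]]
      rw [FiniteField.roots_X_pow_card_sub_X]
      exact Finset.univ.nodup
    exact Multiset.nodup_of_le hle hnd
  have : (Finset.univ.filter fun x : F => x ^ p ^ r = x) = (X ^ p ^ r - X : F[X]).roots.toFinset := by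
    ext x
    simp only [mem_filter, mem_univ, true_and, Multiset.mem_toFinset,
      mem_roots (FiniteField.X_pow_card_pow_sub_X_ne_zero F hr.ne' hp)]
    simp [IsRoot, sub_eq_zero]
  rw [this, Multiset.toFinset_card_of_nodup hnodup, hcard]

private lemma arith1 (m k d : ℕ) (hm : 0 < m) (hk0 : 0 < k) (hd : d = Nat.gcd m k)
    (h2d : 2*d ∣ m + k) :
    ∃ m' k', m = d * m' ∧ k = d * k' ∧ Odd m' ∧ Odd k' ∧ Nat.gcd m' k' = 1 ∧ 0 < d := by
  have hd0 : 0 < d := hd ▸ Nat.gcd_pos_of_pos_left k hm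
  have hdm : d ∣ m := hd ▸ Nat.gcd_dvd_left m k
  have hdk : d ∣ k := hd ▸ Nat.gcd_dvd_right m k
  obtain ⟨m', hm'⟩ := hdm
  obtain ⟨k', hk'⟩ := hdk
  have hcop : Nat.gcd m' k' = 1 := by
    have hco := Nat.coprime_div_gcd_div_gcd (show 0 < Nat.gcd m k from hd ▸ hd0)
    have h1 : m / Nat.gcd m k = m' := by rw [← hd, hm']; exact Nat.mul_div_cancel_left _ hd0
    have h2 : k / Nat.gcd m k = k' := by rw [← hd, hk']; exact Nat.mul_div_cancel_left _ hd0
    rw [h1, h2] at hco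
    exact hco
  have hsum : 2 ∣ m' + k' := by
    obtain ⟨t, ht⟩ := h2d
    have h1 : d * (m' + k') = d * (2 * t) := by
      rw [Nat.mul_add, ← hm', ← hk', ht]; ring
    have := Nat.eq_of_mul_eq_mul_left hd0 h1
    omega
  have hodd : Odd m' ∧ Odd k' := by
    rcases Nat.even_or_odd m' with he | ho
    · rcases Nat.even_or_odd k' with he' | ho'
      · exfalso
        obtain ⟨u, hu⟩ := he
        obtain ⟨v, hv⟩ := he'
        have : 2 ∣ Nat.gcd m' k' := Nat.dvd_gcd ⟨u, by omega⟩ ⟨v, by omega⟩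
        rw [hcop] at this
        omega
      · exfalso
        obtain ⟨u, hu⟩ := he
        obtain ⟨v, hv⟩ := ho'
        omega
    · rcases Nat.even_or_odd k' with he' | ho'
      · exfalso
        obtain ⟨u, hu⟩ := ho
        obtain ⟨v, hv⟩ := he'
        omega
      · exact ⟨ho, ho'⟩
  exact ⟨m', k', hm', hk', hodd.1, hodd.2, hcop, hd0⟩

private lemma arith2 (a b : ℕ) (ha : Odd a) (hb : Odd b) (hab : Nat.gcd a b = 1) (hba : b < a) :
    Nat.gcd (a - b) (2 * a) = 2 := by
  have heven : Even (a - b) := Nat.Odd.sub_odd ha hb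
  obtain ⟨c, hc⟩ := heven
  have hc2 : a - b = 2 * c := by omega
  rw [hc2, Nat.gcd_mul_left]
  have h1 : Nat.gcd c a = 1 := by
    have hd1 : Nat.gcd c a ∣ b := by
      have h2 : Nat.gcd c a ∣ a - b := hc2 ▸ (Nat.gcd_dvd_left c a).mul_left 2
      have h3 : Nat.gcd c a ∣ a := Nat.gcd_dvd_right c a
      have h4 := Nat.dvd_sub h3 h2
      rwa [Nat.sub_sub_self hba.le] at h4
    have h5 := Nat.dvd_gcd hd1 (Nat.gcd_dvd_right c a)
    rw [Nat.gcd_comm a b] at hab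
    rw [hab] at h5
    exact Nat.eq_one_of_dvd_one h5
  rw [h1]

private lemma arith2b (a b : ℕ) (ha : Odd a) (hb : Odd b) (hab : Nat.gcd a b = 1) (hba : b < a) :
    Nat.gcd (a - b) (2 * b) = 2 := by
  have heven : Even (a - b) := Nat.Odd.sub_odd ha hb
  obtain ⟨c, hc⟩ := heven
  have hc2 : a - b = 2 * c := by omega
  rw [hc2, Nat.gcd_mul_left]
  have h1 : Nat.gcd c b = 1 := by
    have hd1 : Nat.gcd c b ∣ a := by
      have h2 : Nat.gcd c b ∣ a - b := hc2 ▸ (Nat.gcd_dvd_left c b).mul_left 2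
      have h3 : Nat.gcd c b ∣ b := Nat.gcd_dvd_right c b
      have h4 := Nat.dvd_add h2 h3
      rwa [Nat.sub_add_cancel hba.le] at h4
    have h5 := Nat.dvd_gcd hd1 (Nat.gcd_dvd_right c b)
    rw [hab] at h5
    exact Nat.eq_one_of_dvd_one h5
  rw [h1]

private lemma arith3 (d t : ℕ) : (d * (2 * t + 1)) % (2 * d) = d % (2 * d) := by
  have h1 : d * (2 * t + 1) = d + (2 * d) * t := by ring
  rw [h1, Nat.add_mul_mod_self_left]

end AuxLemmas

section KerBound
open Finset Polynomial
variable {F : Type} [Field F]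

private lemma kerBound [Fintype F] (p j e g : ℕ) (hp : p.Prime) [CharP F p]
    (hj : 0 < j) (he : 0 < e) (hg : 0 < g)
    (hgg : ∀ u : F, u ^ p ^ e = u → u ^ p ^ g = u)
    (α A B : F) (hA : A ≠ 0) (hB : B ≠ 0) :
    (Finset.univ.filter fun x : F =>
      α * x ^ p ^ (j + e) + A * x ^ p ^ j + B * x ^ p ^ (j + 2 * e) = 0).card ≤ p ^ (2 * g) := by
  classical
  haveI : Fact p.Prime := ⟨hp⟩
  have hp1 : 1 < p := hp.one_lt
  have hpe1 : 1 ≤ p ^ e := Nat.one_le_pow _ _ hp.pos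
  have hpj1 : 1 ≤ p ^ j := Nat.one_le_pow _ _ hp.pos
  have hpg1 : 1 < p ^ g := Nat.one_lt_pow hg.ne' hp1
  set Z : Finset F := univ.filter (fun z => B * z ^ (p ^ e + 1) + α * z + A = 0) with hZdef
  have hZne : ∀ z ∈ Z, z ≠ 0 := by
    rintro z hz rfl
    rw [hZdef, mem_filter] at hz
    have := hz.2
    rw [zero_pow (by positivity), mul_zero, mul_zero, zero_add, zero_add] at this
    exact hA this
  have hZmem : ∀ z ∈ Z, B * (z ^ p ^ e * z) + α * z + A = 0 := by
    intro z hz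
    rw [hZdef, mem_filter] at hz
    rw [← pow_succ]
    exact hz.2
  have hval : ∀ z ∈ Z, z ^ p ^ e = (-(α * z) - A) * (B * z)⁻¹ := by
    intro z hz
    have hz0 := hZne z hz
    have h := hZmem z hz
    rw [eq_mul_inv_iff_mul_eq₀ (mul_ne_zero hB hz0)]
    linear_combination h
  -- bound on Z
  have hZcard : Z.card ≤ p ^ g + 1 := by
    by_cases h3 : Z.card ≤ 2
    · omega
    · push_neg at h3
      obtain ⟨z1, hz1, z2, hz2, z3, hz3, h12, h13, h23⟩ := Finset.two_lt_card.mp h3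
      have hz10 := hZne z1 hz1; have hz20 := hZne z2 hz2; have hz30 := hZne z3 hz3
      have h13' : z1 - z3 ≠ 0 := sub_ne_zero_of_ne h13
      have h12' : z1 - z2 ≠ 0 := sub_ne_zero_of_ne h12
      have h32' : z3 - z2 ≠ 0 := sub_ne_zero_of_ne (Ne.symm h23)
      set W : Finset F := univ.filter (fun c => c ^ p ^ g = c) with hWdef
      have hWcard : W.card ≤ p ^ g := cardFixLe p g hp1 hg
      have hmain : (Z.erase z3).card ≤ W.card := by
        apply Finset.card_le_card_of_injOn
          (fun z => ((z - z2) * (z1 - z3)) * ((z - z3) * (z1 - z2))⁻¹)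
        · intro z hz'
          have hz3' : z ≠ z3 := Finset.ne_of_mem_erase hz'
          have hzZ : z ∈ Z := Finset.mem_of_mem_erase hz'
          have hz0 := hZne z hzZ
          have hzz3 : z - z3 ≠ 0 := sub_ne_zero_of_ne hz3'
          have hden : (z - z3) * (z1 - z2) ≠ 0 := mul_ne_zero hzz3 h12'
          have hdenE : ((z - z3) * (z1 - z2)) ^ p ^ e ≠ 0 := pow_ne_zero _ hden
          have hkey2 : ((z - z2) * (z1 - z3)) ^ p ^ e * ((z - z3) * (z1 - z2))
              = ((z - z2) * (z1 - z3)) * ((z - z3) * (z1 - z2)) ^ p ^ e := by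
            rw [mul_pow, mul_pow, sub_pow_char_pow, sub_pow_char_pow, sub_pow_char_pow,
              sub_pow_char_pow, hval z hzZ, hval z1 hz1, hval z2 hz2, hval z3 hz3]
            field_simp
            ring
          have key : (((z - z2) * (z1 - z3)) * ((z - z3) * (z1 - z2))⁻¹) ^ p ^ e
              = ((z - z2) * (z1 - z3)) * ((z - z3) * (z1 - z2))⁻¹ := by
            rw [mul_pow, inv_pow, ← div_eq_mul_inv, ← div_eq_mul_inv,
              div_eq_div_iff hdenE hden]
            exact hkey2
          rw [hWdef, Finset.mem_coe, mem_filter]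
          exact ⟨mem_univ _, hgg _ key⟩
        · intro z hz' w hw' hfzw
          have hz3' : z ≠ z3 := Finset.ne_of_mem_erase (Finset.mem_coe.mp hz')
          have hw3' : w ≠ z3 := Finset.ne_of_mem_erase (Finset.mem_coe.mp hw')
          have hzz3 : z - z3 ≠ 0 := sub_ne_zero_of_ne hz3'
          have hwz3 : w - z3 ≠ 0 := sub_ne_zero_of_ne hw3'
          have hdz : (z - z3) * (z1 - z2) ≠ 0 := mul_ne_zero hzz3 h12'
          have hdw : (w - z3) * (z1 - z2) ≠ 0 := mul_ne_zero hwz3 h12'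
          have hfzw2 : ((z - z2) * (z1 - z3)) * ((z - z3) * (z1 - z2))⁻¹
              = ((w - z2) * (z1 - z3)) * ((w - z3) * (z1 - z2))⁻¹ := hfzw
          rw [← div_eq_mul_inv, ← div_eq_mul_inv, div_eq_div_iff hdz hdw] at hfzw2
          have hfzw := hfzw2
          have h0 : (z1 - z3) * ((z1 - z2) * ((z3 - z2) * (w - z))) = 0 := by
            linear_combination hfzw
          have hwz : w - z = 0 := by
            rcases mul_eq_zero.mp h0 with h | h
            · exact absurd h h13'
            rcases mul_eq_zero.mp h with h | h
            · exact absurd h h12'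
            rcases mul_eq_zero.mp h with h | h
            · exact absurd h h32'
            · exact h
          have := sub_eq_zero.mp hwz
          exact this.symm
      have hZe : Z.card = (Z.erase z3).card + 1 := by
        rw [Finset.card_erase_of_mem hz3]
        have := Finset.card_pos.mpr ⟨z3, hz3⟩
        omega
      omega
  -- Now bound the kernel via the map x ↦ x ^ (p^j * (p^e - 1))
  set KK : Finset F := univ.filter (fun x : F =>
    α * x ^ p ^ (j + e) + A * x ^ p ^ j + B * x ^ p ^ (j + 2 * e) = 0) with hKKdef
  have h0K : (0 : F) ∈ KK := by
    rw [hKKdef, mem_filter]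
    refine ⟨mem_univ _, ?_⟩
    rw [zero_pow (by positivity), zero_pow (by positivity), zero_pow (by positivity)]
    ring
  set N := p ^ j * (p ^ e - 1) with hNdef
  have hple : p ^ j ≤ p ^ (j + e) := by
    rw [pow_add]; exact Nat.le_mul_of_pos_right _ (by positivity)
  have hid1 : p ^ j + N = p ^ (j + e) := by
    rw [hNdef, Nat.mul_sub, mul_one, ← pow_add]
    omega
  have hsq : (p ^ e - 1) * (p ^ e + 1) = p ^ (2 * e) - 1 := by
    obtain ⟨b, hb⟩ : ∃ b, p ^ e = b + 1 := ⟨p ^ e - 1, by omega⟩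
    have h2 : p ^ (2 * e) = p ^ e * p ^ e := by rw [two_mul, pow_add]
    have h3 : (b + 1) * (b + 1) = b * (b + 1 + 1) + 1 := by ring
    rw [hb] at h2 ⊢
    simp only [Nat.add_sub_cancel]
    omega
  have hple2 : p ^ j ≤ p ^ (j + 2 * e) := by
    rw [pow_add]; exact Nat.le_mul_of_pos_right _ (by positivity)
  have hid2 : N * (p ^ e + 1) + p ^ j = p ^ (j + 2 * e) := by
    rw [hNdef, mul_assoc, hsq, Nat.mul_sub, mul_one, ← pow_add]
    omega
  have hmaps : ∀ x ∈ KK.erase 0, x ^ N ∈ Z := by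
    intro x hx
    have hx0 : x ≠ 0 := Finset.ne_of_mem_erase hx
    have hxK : α * x ^ p ^ (j + e) + A * x ^ p ^ j + B * x ^ p ^ (j + 2 * e) = 0 := by
      have := Finset.mem_of_mem_erase hx
      rw [hKKdef, mem_filter] at this
      exact this.2
    have hxj : x ^ p ^ j ≠ 0 := pow_ne_zero _ hx0
    have expand : α * x ^ p ^ (j + e) + A * x ^ p ^ j + B * x ^ p ^ (j + 2 * e)
        = x ^ p ^ j * (B * (x ^ N) ^ (p ^ e + 1) + α * x ^ N + A) := by
      rw [← hid1, ← hid2, pow_add, pow_add, ← pow_mul]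
      ring
    rw [expand] at hxK
    have hz := (mul_eq_zero.mp hxK).resolve_left hxj
    rw [hZdef, mem_filter]
    exact ⟨mem_univ _, hz⟩
  have hfib : ∀ z ∈ Z, ((KK.erase 0).filter (fun x => x ^ N = z)).card ≤ p ^ g - 1 := by
    intro z hzZ
    by_cases hne : ((KK.erase 0).filter (fun x => x ^ N = z)).Nonempty
    · obtain ⟨y, hy⟩ := hne
      rw [mem_filter] at hy
      have hy0 : y ≠ 0 := Finset.ne_of_mem_erase hy.1
      have hyN : y ^ N = z := hy.2
      have hz0 : z ≠ 0 := hyN ▸ pow_ne_zero _ hy0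
      have hW1 : (univ.filter (fun u : F => u ^ (p ^ g - 1) = 1)).card ≤ p ^ g - 1 :=
        cardPowEqLe (p ^ g - 1) (by omega) 1
      refine le_trans (Finset.card_le_card_of_injOn (fun x => x * y⁻¹) ?_ ?_) hW1
      · intro x hx
        rw [Finset.mem_coe, mem_filter] at hx
        have hx0 : x ≠ 0 := Finset.ne_of_mem_erase hx.1
        have hxN : x ^ N = z := hx.2
        set u := x * y⁻¹ with hu
        have hu0 : u ≠ 0 := mul_ne_zero hx0 (inv_ne_zero hy0)
        have huN : u ^ N = 1 := by
          rw [hu, mul_pow, inv_pow, hxN, hyN, mul_inv_cancel₀ hz0]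
        have h1 : (u ^ (p ^ e - 1)) ^ p ^ j = 1 := by
          rw [← pow_mul, mul_comm (p ^ e - 1) (p ^ j)]
          exact huN
        have h2 : u ^ (p ^ e - 1) = 1 := by
          have h3 : (u ^ (p ^ e - 1) - 1) ^ p ^ j = 0 := by
            rw [sub_pow_char_pow, h1, one_pow, sub_self]
          have h4 := pow_eq_zero_iff (by positivity : p ^ j ≠ 0) |>.mp h3
          have := sub_eq_zero.mp h4
          exact this
        have h4 : u ^ p ^ e = u := by
          rw [show p ^ e = (p ^ e - 1) + 1 by omega, pow_succ, h2, one_mul]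
        have h5 := hgg u h4
        have h6 : u ^ (p ^ g - 1) * u = 1 * u := by
          rw [one_mul, ← pow_succ, show (p ^ g - 1) + 1 = p ^ g by omega, h5]
        have h7 := mul_right_cancel₀ hu0 h6
        rw [Finset.mem_coe, mem_filter]
        exact ⟨mem_univ _, h7⟩
      · intro a _ b _ hab
        exact mul_right_cancel₀ (inv_ne_zero hy0) hab
    · rw [Finset.not_nonempty_iff_eq_empty.mp hne]
      simp
  have hcount : (KK.erase 0).card ≤ (p ^ g - 1) * Z.card :=
    Finset.card_le_mul_card_image_of_maps_to hmaps (p ^ g - 1) hfib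
  have hKKcard : KK.card = (KK.erase 0).card + 1 := by
    rw [Finset.card_erase_of_mem h0K]
    have := Finset.card_pos.mpr ⟨(0 : F), h0K⟩
    omega
  have harith : (p ^ g - 1) * (p ^ g + 1) + 1 = p ^ (2 * g) := by
    have h2 : p ^ (2 * g) = p ^ g * p ^ g := by rw [two_mul, pow_add]
    obtain ⟨b, hb⟩ : ∃ b, p ^ g = b + 1 := ⟨p ^ g - 1, by omega⟩
    have h3 : (b + 1) * (b + 1) = b * (b + 1 + 1) + 1 := by ring
    rw [hb] at h2 ⊢
    simp only [Nat.add_sub_cancel]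
    omega
  have hmul := Nat.mul_le_mul_left (p ^ g - 1) hZcard
  omega

end KerBound

theorem stmt1 (p m k n d d' : ℕ) (hp : Nat.Prime p) (hodd : p % 2 = 1)
    (hm : 0 < m) (hn : n = 2 * m) (hk : k ≤ n - 1) (hkm : k ≠ m)
    (hd : d = Nat.gcd m k) (hd' : d' = Nat.gcd (m + k) (2 * k))
    (F : Type) [Field F] [Fintype F] [Algebra (ZMod p) F] (hF : Fintype.card F = p ^ n) (s : ℕ) (hs : s = n / d)
    (hcase : d' = 2 * d)
    (α β : F) (hα : α ^ p ^ m = α) (hne : ¬(α = 0 ∧ β = 0)) :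
    Nat.card {x : F // phiMap p m n k α β x = 0} = 1 ∨
    Nat.card {x : F // phiMap p m n k α β x = 0} = p ^ (2 * d) ∨
    Nat.card {x : F // phiMap p m n k α β x = 0} = p ^ (4 * d) := by
  classical
  haveI : Fact p.Prime := ⟨hp⟩
  haveI hchar : CharP F p := charP_of_injective_algebraMap (algebraMap (ZMod p) F).injective p
  have hp1 : 1 < p := hp.one_lt
  have hpodd : Odd p := Nat.odd_iff.mpr hodd
  have hn2 : 2 ≤ n := by omega
  have hkn : k < n := by omega
  have hpm0 : p ^ m ≠ 0 := by positivity
  have hpk0 : p ^ k ≠ 0 := by positivity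
  have hpnk0 : p ^ (n - k) ≠ 0 := by positivity
  -- degenerate case β = 0
  by_cases hβ : β = 0
  · left
    have hα0 : α ≠ 0 := fun h => hne ⟨h, hβ⟩
    have hiff : ∀ x : F, phiMap p m n k α β x = 0 ↔ x = 0 := by
      intro x
      simp only [phiMap, hβ, zero_mul, add_zero, zero_pow hpnk0]
      constructor
      · intro h
        have h2 := (mul_eq_zero.mp h).resolve_left hα0
        exact pow_eq_zero_iff hpm0 |>.mp h2
      · rintro rfl
        rw [zero_pow hpm0, mul_zero]
    rw [Nat.card_congr (Equiv.subtypeEquivRight hiff)]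
    haveI : Unique {x : F // x = 0} :=
      ⟨⟨⟨0, rfl⟩⟩, fun x => Subtype.ext x.2⟩
    exact Nat.card_unique
  -- main case β ≠ 0
  have hk0 : 0 < k := by
    rcases Nat.eq_zero_or_pos k with rfl | h
    · exfalso
      simp only [Nat.add_zero, Nat.mul_zero, Nat.gcd_zero_right] at hd hd'
      omega
    · exact h
  have h2d : 2 * d ∣ m + k := by
    rw [← hcase, hd']
    exact Nat.gcd_dvd_left _ _
  obtain ⟨m', k', hmeq, hkeq, hom, hok, hcop, hd0⟩ := arith1 m k d hm hk0 hd h2d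
  set r := 2 * d with hrdef
  have hr0 : 0 < r := by omega
  have hoddpow : Odd (p ^ r) := hpodd.pow
  have hrn : r ∣ n := ⟨m', by rw [hn, hmeq, hrdef]; ring⟩
  obtain ⟨t1, ht1⟩ := hom
  obtain ⟨u1, hu1⟩ := hok
  have hmcong : m % r = d % r := by rw [hmeq, ht1, hrdef]; exact arith3 d t1
  have hkcong : k % r = d % r := by rw [hkeq, hu1, hrdef]; exact arith3 d u1
  have hk2m : k' < 2 * m' := by
    have h1 : d * k' < d * (2 * m') := by
      rw [← hkeq, show d * (2 * m') = n by rw [hn, hmeq]; ring]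
      exact hkn
    exact lt_of_mul_lt_mul_left h1 (Nat.zero_le d)
  have hnkeq : n - k = d * (2 * m' - k') := by
    rw [hn, hmeq, hkeq, Nat.mul_sub, show 2 * (d * m') = d * (2 * m') by ring]
  have hnkodd : ∃ v, 2 * m' - k' = 2 * v + 1 := ⟨m' - u1 - 1, by omega⟩
  obtain ⟨v1, hv1⟩ := hnkodd
  have hnkcong : (n - k) % r = d % r := by rw [hnkeq, hv1, hrdef]; exact arith3 d v1
  -- the subfield E with p^r elements
  set E : Subfield F := {
    carrier := {x : F | x ^ p ^ r = x}
    mul_mem' := fun {a b} ha hb => by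
      simp only [Set.mem_setOf_eq] at *
      rw [mul_pow, ha, hb]
    one_mem' := by simp
    add_mem' := fun {a b} ha hb => by
      simp only [Set.mem_setOf_eq] at *
      rw [add_pow_char_pow, ha, hb]
    zero_mem' := by
      simp only [Set.mem_setOf_eq]
      exact zero_pow (by positivity)
    neg_mem' := fun {a} ha => by
      simp only [Set.mem_setOf_eq] at *
      rw [hoddpow.neg_pow, ha]
    inv_mem' := fun a ha => by
      simp only [Set.mem_setOf_eq] at *
      rw [inv_pow, ha] } with hEdef
  have hcardE : Fintype.card E = p ^ r := by
    have h1 : Fintype.card E = Fintype.card {x : F // x ^ p ^ r = x} :=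
      Fintype.card_congr (Equiv.subtypeEquivRight fun x => Iff.rfl)
    rw [h1, Fintype.card_subtype]
    exact cardFixEq p n r hp1 hF hr0 hrn
  -- the kernel as an E-submodule
  set K : Submodule E F := {
    carrier := {x : F | phiMap p m n k α β x = 0}
    add_mem' := fun {a b} ha hb => by
      simp only [Set.mem_setOf_eq, phiMap] at *
      rw [add_pow_char_pow, add_pow_char_pow, add_pow_char_pow]
      linear_combination ha + hb
    zero_mem' := by
      simp only [Set.mem_setOf_eq, phiMap]
      rw [zero_pow hpm0, zero_pow hpk0, zero_pow hpnk0]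
      ring
    smul_mem' := fun c x hx => by
      simp only [Set.mem_setOf_eq, phiMap] at *
      have hc : (c : F) ^ p ^ r = (c : F) := c.2
      have h1 : (c : F) ^ p ^ m = (c : F) ^ p ^ d := fixCongr p r m d _ hc hmcong
      have h2 : (c : F) ^ p ^ k = (c : F) ^ p ^ d := fixCongr p r k d _ hc hkcong
      have h3 : (c : F) ^ p ^ (n - k) = (c : F) ^ p ^ d := fixCongr p r (n - k) d _ hc hnkcong
      have hsmul : c • x = (c : F) * x := rfl
      rw [hsmul, mul_pow, mul_pow, mul_pow, h1, h2, h3]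
      linear_combination (c : F) ^ p ^ d * hx } with hKdef
  have hNK : Nat.card {x : F // phiMap p m n k α β x = 0} = Fintype.card K := by
    rw [Nat.card_eq_fintype_card]
    exact Fintype.card_congr (Equiv.subtypeEquivRight fun x => Iff.rfl)
  have hKpow : Fintype.card K = (p ^ r) ^ (Module.finrank E K) := by
    rw [← hcardE]
    exact Module.card_eq_pow_finrank
  -- upper bound via kerBound
  have hfiltK : Fintype.card K =
      (Finset.univ.filter (fun x : F => phiMap p m n k α β x = 0)).card := by
    rw [← Fintype.card_subtype]
    exact Fintype.card_congr (Equiv.subtypeEquivRight fun x => Iff.rfl)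
  have hbound : (Finset.univ.filter (fun x : F => phiMap p m n k α β x = 0)).card
      ≤ p ^ (2 * r) := by
    rcases lt_or_gt_of_ne hkm with hlt | hgt
    · -- k < m
      have hkm'' : k' < m' := by
        have h1 : d * k' < d * m' := by rw [← hkeq, ← hmeq]; exact hlt
        exact lt_of_mul_lt_mul_left h1 (Nat.zero_le d)
      have h1 : k + (m - k) = m := by omega
      have h2 : k + 2 * (m - k) = n - k := by omega
      have heq : (Finset.univ.filter (fun x : F => phiMap p m n k α β x = 0))
          = (Finset.univ.filter (fun x : F => α * x ^ p ^ (k + (m - k)) + β * x ^ p ^ k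
              + (β ^ p ^ (n - k)) * x ^ p ^ (k + 2 * (m - k)) = 0)) := by
        ext x
        simp only [Finset.mem_filter, Finset.mem_univ, true_and]
        simp only [phiMap, h1, h2]
      rw [heq]
      have he1 : m - k = d * (m' - k') := by rw [hmeq, hkeq, Nat.mul_sub]
      have hn1 : n = d * (2 * m') := by rw [hn, hmeq]; ring
      have hgcd : Nat.gcd (m - k) n = r := by
        rw [he1, hn1, Nat.gcd_mul_left, arith2 m' k' ⟨t1, ht1⟩ ⟨u1, hu1⟩ hcop hkm'', hrdef]
        ring
      refine kerBound p k (m - k) r hp hk0 (by omega) hr0 ?_ α β (β ^ p ^ (n - k)) hβ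
        (pow_ne_zero _ hβ)
      intro u hu
      have hun : u ^ p ^ n = u := by rw [← hF]; exact FiniteField.pow_card u
      have h3 := fixPowGcd p u (m - k) n hu hun
      rwa [hgcd] at h3
    · -- m < k
      have hkm'' : m' < k' := by
        have h1 : d * m' < d * k' := by rw [← hkeq, ← hmeq]; exact hgt
        exact lt_of_mul_lt_mul_left h1 (Nat.zero_le d)
      have h1 : (n - k) + (k - m) = m := by omega
      have h2 : (n - k) + 2 * (k - m) = k := by omega
      have heq : (Finset.univ.filter (fun x : F => phiMap p m n k α β x = 0))
          = (Finset.univ.filter (fun x : F => α * x ^ p ^ ((n - k) + (k - m))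
              + (β ^ p ^ (n - k)) * x ^ p ^ (n - k)
              + β * x ^ p ^ ((n - k) + 2 * (k - m)) = 0)) := by
        ext x
        simp only [Finset.mem_filter, Finset.mem_univ, true_and]
        simp only [phiMap, h1, h2]
        constructor <;> intro hx <;> linear_combination hx
      rw [heq]
      have he1 : k - m = d * (k' - m') := by rw [hmeq, hkeq, Nat.mul_sub]
      have hn1 : n = d * (2 * m') := by rw [hn, hmeq]; ring
      have hgcd : Nat.gcd (k - m) n = r := by
        rw [he1, hn1, Nat.gcd_mul_left, arith2b k' m' ⟨u1, hu1⟩ ⟨t1, ht1⟩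
          (by rw [Nat.gcd_comm]; exact hcop) hkm'', hrdef]
        ring
      refine kerBound p (n - k) (k - m) r hp (by omega) (by omega) hr0 ?_ α
        (β ^ p ^ (n - k)) β (pow_ne_zero _ hβ) hβ
      intro u hu
      have hun : u ^ p ^ n = u := by rw [← hF]; exact FiniteField.pow_card u
      have h3 := fixPowGcd p u (k - m) n hu hun
      rwa [hgcd] at h3
  -- combine
  have hle : (p ^ r) ^ (Module.finrank E K) ≤ (p ^ r) ^ 2 := by
    rw [← hKpow, hfiltK]
    calc (Finset.univ.filter (fun x : F => phiMap p m n k α β x = 0)).card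
        ≤ p ^ (2 * r) := hbound
      _ = (p ^ r) ^ 2 := by rw [← pow_mul, Nat.mul_comm]
  have ht2 : Module.finrank E K ≤ 2 :=
    (Nat.pow_le_pow_iff_right (Nat.one_lt_pow hr0.ne' hp1)).mp hle
  have hcases : Module.finrank E K = 0 ∨ Module.finrank E K = 1 ∨ Module.finrank E K = 2 := by
    omega
  rcases hcases with h | h | h
  · left
    rw [hNK, hKpow, h, pow_zero]
  · right; left
    rw [hNK, hKpow, h, pow_one]
  · right; right
    rw [hNK, hKpow, h, ← pow_mul, show r * 2 = 4 * d by omega]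
end
end

section
/- Suppose d' = 2d and (α,β) ∈ F_{p^m} × F_q with (α,β) ≠ (0,0). Let N be the number of pairs (x,y) ∈ F_q × F_q satisfying (1/2)·α x^{p^m+1} + β x^{p^k+1} = y^{p^d} − y. Then, as complex numbers, N = q + (p^d − 1)·T(α,β). -/
open scoped BigOperators Classical

noncomputable section

namespace S6
open Finset Polynomial

theorem exp_shift (p : ℕ) (hp : p ≠ 0) (t r : ℕ) :
    Complex.exp (2*Real.pi*Complex.I*((p*t+r : ℕ):ℂ)/p) = Complex.exp (2*Real.pi*Complex.I*(r:ℂ)/p) := by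
  have hpC : (p:ℂ) ≠ 0 := Nat.cast_ne_zero.mpr hp
  have h : 2*Real.pi*Complex.I*((p*t+r : ℕ):ℂ)/p = (t:ℂ)*(2*Real.pi*Complex.I) + 2*Real.pi*Complex.I*(r:ℂ)/p := by
    push_cast
    field_simp
  rw [h, Complex.exp_add,
    show ((t : ℕ):ℂ) * (2*Real.pi*Complex.I) = ((((t : ℕ):ℤ)):ℂ) * (2*Real.pi*Complex.I) by
      norm_num,
    Complex.exp_int_mul_two_pi_mul_I, one_mul]

theorem exp_natmod (p : ℕ) (hp : p ≠ 0) (v : ℕ) :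
    Complex.exp (2*Real.pi*Complex.I*((v % p : ℕ):ℂ)/p) = Complex.exp (2*Real.pi*Complex.I*(v:ℂ)/p) := by
  conv_rhs => rw [← Nat.div_add_mod v p]
  rw [exp_shift p hp]

theorem expChar_add {p : ℕ} (hp : p ≠ 0) (a b : ZMod p) :
    expChar p (a + b) = expChar p a * expChar p b := by
  haveI : NeZero p := ⟨hp⟩
  unfold expChar
  rw [ZMod.val_add, exp_natmod p hp, ← Complex.exp_add]
  congr 1
  have hpC : (p:ℂ) ≠ 0 := Nat.cast_ne_zero.mpr hp
  push_cast
  field_simp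

theorem expChar_zero (p : ℕ) : expChar p 0 = 1 := by
  unfold expChar
  rcases Nat.eq_zero_or_pos p with h | h
  · subst h
    simp
  · haveI : NeZero p := ⟨h.ne'⟩
    simp

theorem expChar_ne_one {p : ℕ} (hp : 1 < p) {a : ZMod p} (ha : a ≠ 0) : expChar p a ≠ 1 := by
  haveI : NeZero p := ⟨by omega⟩
  unfold expChar
  intro h
  rw [Complex.exp_eq_one_iff] at h
  obtain ⟨t, ht⟩ := h
  have hpC : (p:ℂ) ≠ 0 := Nat.cast_ne_zero.mpr (by omega)
  have h2 : (2*Real.pi*Complex.I) ≠ 0 :=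
    mul_ne_zero (mul_ne_zero two_ne_zero (Complex.ofReal_ne_zero.mpr Real.pi_ne_zero))
      Complex.I_ne_zero
  have h3 : (2*Real.pi*Complex.I) * ((a.val:ℂ)/p) = (2*Real.pi*Complex.I) * t := by
    rw [mul_comm ((t:ℂ)) (2*Real.pi*Complex.I)] at ht
    rw [← ht]; ring
  have h4 : ((a.val:ℂ)/p) = t := mul_left_cancel₀ h2 h3
  have h5 : ((a.val:ℂ)) = t*p := (div_eq_iff hpC).mp h4
  have h6 : ((a.val:ℤ)) = t*p := by exact_mod_cast h5
  have h8 : p ∣ a.val := Int.natCast_dvd_natCast.mp ⟨t, by rw [h6, mul_comm]⟩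
  have h9 : a.val = 0 := Nat.eq_zero_of_dvd_of_lt h8 (ZMod.val_lt a)
  exact ha ((ZMod.val_eq_zero a).mp h9)

/-! ### root counting -/

theorem card_pow_eq_self_le (F : Type) [Field F] [Fintype F] {e : ℕ} (he : 1 < e) :
    (Finset.univ.filter fun x : F => x ^ e = x).card ≤ e := by
  classical
  set f : F[X] := Polynomial.X ^ e - Polynomial.X with hf
  have hdX : (Polynomial.X : F[X]).natDegree < (Polynomial.X ^ e : F[X]).natDegree := by
    simpa [Polynomial.natDegree_X_pow] using he
  have hdeg : f.natDegree = e := by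
    rw [hf, Polynomial.natDegree_sub_eq_left_of_natDegree_lt hdX, Polynomial.natDegree_X_pow]
  have hf0 : f ≠ 0 := fun h => by simp [h] at hdeg; omega
  have hsub : (Finset.univ.filter fun x : F => x ^ e = x) ⊆ f.roots.toFinset := by
    intro x hx
    rw [Finset.mem_filter] at hx
    rw [Multiset.mem_toFinset, Polynomial.mem_roots hf0]
    simp [Polynomial.IsRoot, hf, sub_eq_zero, hx.2]
  calc (Finset.univ.filter fun x : F => x ^ e = x).card ≤ f.roots.toFinset.card :=
        Finset.card_le_card hsub
    _ ≤ Multiset.card f.roots := Multiset.toFinset_card_le _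
    _ ≤ f.natDegree := Polynomial.card_roots' f
    _ = e := hdeg

theorem card_trSum_zero_le (F : Type) [Field F] [Fintype F] {p t r : ℕ} (hp : 1 < p)
    (ht : 0 < t) (hr : 0 < r) :
    (Finset.univ.filter fun x : F => trSum p t r x = 0).card ≤ p ^ (t * (r - 1)) := by
  classical
  set f : F[X] := ∑ i ∈ Finset.range r, Polynomial.X ^ (p ^ (t * i)) with hf
  have heval : ∀ x : F, f.eval x = trSum p t r x := by
    intro x
    simp [hf, trSum, Polynomial.eval_finset_sum]
  have hcoeff : f.coeff (p ^ (t * (r - 1))) = 1 := by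
    rw [hf, Polynomial.finset_sum_coeff]
    rw [Finset.sum_eq_single (r - 1)]
    · simp [Polynomial.coeff_X_pow]
    · intro i hi hne
      rw [Polynomial.coeff_X_pow, if_neg]
      intro h
      have h' := Nat.pow_right_injective hp h
      exact hne (Nat.eq_of_mul_eq_mul_left ht h'.symm)
    · intro h
      exact absurd (Finset.mem_range.mpr (by omega)) h
  have hf0 : f ≠ 0 := fun h => by simp [h] at hcoeff
  have hdeg : f.natDegree ≤ p ^ (t * (r - 1)) := by
    apply Polynomial.natDegree_sum_le_of_forall_le
    intro i hi
    rw [Polynomial.natDegree_X_pow]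
    exact Nat.pow_le_pow_right (by omega) (Nat.mul_le_mul_left t (by
      have := Finset.mem_range.mp hi; omega))
  have hsub : (Finset.univ.filter fun x : F => trSum p t r x = 0) ⊆ f.roots.toFinset := by
    intro x hx
    rw [Finset.mem_filter] at hx
    rw [Multiset.mem_toFinset, Polynomial.mem_roots hf0]
    simp [Polynomial.IsRoot, heval, hx.2]
  calc (Finset.univ.filter fun x : F => trSum p t r x = 0).card ≤ f.roots.toFinset.card :=
        Finset.card_le_card hsub
    _ ≤ Multiset.card f.roots := Multiset.toFinset_card_le _
    _ ≤ f.natDegree := Polynomial.card_roots' f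
    _ ≤ p ^ (t * (r - 1)) := hdeg

/-! ### fToZMod -/

theorem algebraMap_injective (p : ℕ) (hp : p.Prime) (F : Type) [Field F] [Algebra (ZMod p) F] :
    Function.Injective (algebraMap (ZMod p) F) := by
  haveI := Fact.mk hp
  exact (algebraMap (ZMod p) F).injective

theorem fToZMod_algebraMap {p : ℕ} (hp : p.Prime) {F : Type} [Field F] [Algebra (ZMod p) F]
    (a : ZMod p) : fToZMod p (algebraMap (ZMod p) F a) = a := by
  haveI : Nonempty (ZMod p) := ⟨0⟩
  exact Function.leftInverse_invFun (algebraMap_injective p hp F) a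

theorem exists_algebraMap_eq {p : ℕ} (hp : p.Prime) {F : Type} [Field F] [Fintype F]
    [Algebra (ZMod p) F] {x : F} (hx : x ^ p = x) :
    ∃ a : ZMod p, algebraMap (ZMod p) F a = x := by
  classical
  haveI := Fact.mk hp
  set R : Finset F := Finset.univ.image (algebraMap (ZMod p) F) with hR
  set S : Finset F := Finset.univ.filter (fun x : F => x ^ p = x) with hS
  have hRS : R ⊆ S := by
    intro y hy
    rw [hR, Finset.mem_image] at hy
    obtain ⟨a, _, rfl⟩ := hy
    rw [hS, Finset.mem_filter]
    refine ⟨Finset.mem_univ _, ?_⟩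
    rw [← map_pow, ZMod.pow_card]
  have hcardR : R.card = p := by
    rw [hR, Finset.card_image_of_injective _ (algebraMap_injective p hp F), Finset.card_univ,
      ZMod.card]
  have hcardS : S.card ≤ p := card_pow_eq_self_le F hp.one_lt
  have hSR : S = R := (Finset.eq_of_subset_of_card_le hRS (by omega)).symm
  have hxS : x ∈ S := by rw [hS, Finset.mem_filter]; exact ⟨Finset.mem_univ _, hx⟩
  rw [hSR, hR, Finset.mem_image] at hxS
  obtain ⟨a, _, ha⟩ := hxS
  exact ⟨a, ha⟩

theorem fToZMod_add {p : ℕ} (hp : p.Prime) {F : Type} [Field F] [Fintype F]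
    [Algebra (ZMod p) F] {x y : F} (hx : x ^ p = x) (hy : y ^ p = y) :
    fToZMod p (x + y) = fToZMod p x + fToZMod p y := by
  obtain ⟨a, rfl⟩ := exists_algebraMap_eq hp hx
  obtain ⟨b, rfl⟩ := exists_algebraMap_eq hp hy
  rw [← map_add, fToZMod_algebraMap hp, fToZMod_algebraMap hp, fToZMod_algebraMap hp]

theorem fToZMod_zero {p : ℕ} (hp : p.Prime) {F : Type} [Field F] [Algebra (ZMod p) F] :
    fToZMod p (0 : F) = 0 := by
  have := fToZMod_algebraMap hp (F := F) 0
  rwa [map_zero] at this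

theorem fToZMod_ne_zero {p : ℕ} (hp : p.Prime) {F : Type} [Field F] [Fintype F]
    [Algebra (ZMod p) F] {x : F} (hx : x ^ p = x) (hx0 : x ≠ 0) : fToZMod p x ≠ 0 := by
  obtain ⟨a, rfl⟩ := exists_algebraMap_eq hp hx
  rw [fToZMod_algebraMap hp]
  intro h
  subst h
  exact hx0 (map_zero _)

/-! ### trSum lemmas -/

theorem charP_of_algebra {p : ℕ} (hp : p.Prime) (F : Type) [Field F] [Algebra (ZMod p) F] :
    CharP F p := by
  haveI := Fact.mk hp
  exact charP_of_injective_algebraMap (algebraMap_injective p hp F) p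

section TrSum

variable {p : ℕ} {F : Type} [Field F] [Algebra (ZMod p) F]

theorem trSum_add (hp : p.Prime) (t r : ℕ) (x y : F) :
    trSum p t r (x + y) = trSum p t r x + trSum p t r y := by
  haveI := Fact.mk hp
  haveI := charP_of_algebra hp F
  unfold trSum
  rw [← Finset.sum_add_distrib]
  exact Finset.sum_congr rfl fun i _ => add_pow_char_pow ..

theorem trSum_zero' (hp : p.Prime) (t r : ℕ) : trSum p t r (0 : F) = 0 := by
  unfold trSum
  apply Finset.sum_eq_zero
  intro i _
  exact zero_pow (pow_ne_zero _ hp.pos.ne')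

theorem trSum_sum (hp : p.Prime) (t r : ℕ) {ι : Type} (s : Finset ι) (f : ι → F) :
    trSum p t r (∑ i ∈ s, f i) = ∑ i ∈ s, trSum p t r (f i) := by
  classical
  induction s using Finset.induction with
  | empty => simp [trSum_zero' hp]
  | insert _ _ hx ih =>
      rw [Finset.sum_insert hx, Finset.sum_insert hx, trSum_add hp, ih]

theorem sum_cycle {r : ℕ} (f : ℕ → F) (h : f r = f 0) :
    ∑ i ∈ Finset.range r, f (i + 1) = ∑ i ∈ Finset.range r, f i := by
  have h1 := Finset.sum_range_succ' f r
  have h2 := Finset.sum_range_succ f r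
  rw [h1, h] at h2
  exact add_right_cancel h2

theorem trSum_frob_fixed (hp : p.Prime) (t r : ℕ) {x : F} (hx : x ^ p ^ (t * r) = x) :
    (trSum p t r x) ^ p ^ t = trSum p t r x := by
  haveI := Fact.mk hp
  haveI := charP_of_algebra hp F
  unfold trSum
  rw [sum_pow_char_pow]
  have : ∀ i, (x ^ p ^ (t * i)) ^ p ^ t = x ^ p ^ (t * (i + 1)) := by
    intro i
    have he : t * i + t = t * (i + 1) := by ring
    rw [← pow_mul, ← pow_add, he]
  rw [Finset.sum_congr rfl fun i _ => this i]
  exact sum_cycle (fun i => x ^ p ^ (t * i)) (by simpa using hx)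

theorem pow_pow_fixed_iter {e : ℕ} {l : F} (hl : l ^ p ^ e = l) (i : ℕ) :
    l ^ p ^ (e * i) = l := by
  induction i with
  | zero => simp
  | succ i ih =>
      rw [Nat.mul_add, Nat.mul_one, pow_add, pow_mul, ih, hl]

theorem trSum_blocks (hp : p.Prime) (e r : ℕ) (z : F) :
    trSum p 1 (e * r) z = ∑ i ∈ Finset.range r, trSum p 1 e (z ^ p ^ (e * i)) := by
  induction r with
  | zero => simp [trSum]
  | succ r ih =>
      rw [Finset.sum_range_succ, ← ih, Nat.mul_add, Nat.mul_one]
      unfold trSum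
      rw [Finset.sum_range_add]
      congr 1
      apply Finset.sum_congr rfl
      intro i _
      have he : 1 * (e * r + i) = e * r + 1 * i := by ring
      rw [he, pow_add, pow_mul]

theorem trSum_decomp (hp : p.Prime) {e : ℕ} (r : ℕ) {l : F} (hl : l ^ p ^ e = l) (c : F) :
    trSum p 1 (e * r) (l * c) = trSum p 1 e (l * trSum p e r c) := by
  rw [trSum_blocks hp e r]
  have h1 : ∀ i, (l * c) ^ p ^ (e * i) = l * c ^ p ^ (e * i) := by
    intro i
    rw [mul_pow, pow_pow_fixed_iter hl]
  rw [Finset.sum_congr rfl fun i _ => congrArg _ (h1 i)]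
  have h2 : l * trSum p e r c = ∑ i ∈ Finset.range r, l * c ^ p ^ (e * i) := by
    rw [trSum, Finset.mul_sum]
  rw [h2, trSum_sum hp]

theorem trSum_telescope (hp : p.Prime) (e r : ℕ) (y : F) :
    trSum p e r (y ^ p ^ e - y) = y ^ p ^ (e * r) - y := by
  haveI := Fact.mk hp
  haveI := charP_of_algebra hp F
  unfold trSum
  have h1 : ∀ i, (y ^ p ^ e - y) ^ p ^ (e * i) = y ^ p ^ (e * (i+1)) - y ^ p ^ (e * i) := by
    intro i
    rw [sub_pow_char_pow, ← pow_mul, ← pow_add]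
    congr 2
    ring
  rw [Finset.sum_congr rfl fun i _ => h1 i, Finset.sum_range_sub (fun i => y ^ p ^ (e * i))]
  simp

theorem trSum_double (hp : p.Prime) (m : ℕ) {w : F} (hw : w ^ p ^ m = w) :
    trSum p 1 (m + m) w = trSum p 1 m w + trSum p 1 m w := by
  unfold trSum
  rw [Finset.sum_range_add]
  congr 1
  apply Finset.sum_congr rfl
  intro i _
  simp only [one_mul]
  rw [pow_add, pow_mul, hw]

theorem trSum_half (hp : p.Prime) (hodd : p % 2 = 1) (m : ℕ) {w : F} (hw : w ^ p ^ m = w) :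
    trSum p 1 (m + m) ((2 : F)⁻¹ * w) = trSum p 1 m w := by
  haveI := Fact.mk hp
  haveI := charP_of_algebra hp F
  have h2 : (2 : F) ≠ 0 := by
    intro h
    have hd := (CharP.cast_eq_zero_iff F p 2).mp (by exact_mod_cast h)
    have hle := Nat.le_of_dvd (by norm_num) hd
    have := hp.two_le
    omega
  have hmap : ((2:F)⁻¹) = algebraMap (ZMod p) F ((2:ZMod p)⁻¹) := by
    rw [map_inv₀, map_ofNat]
  have hw2 : ((2:F)⁻¹ * w) ^ p ^ m = (2:F)⁻¹ * w := by
    rw [mul_pow, hw, hmap, ← map_pow, ZMod.pow_card_pow]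
  rw [trSum_double hp m hw2, ← trSum_add hp]
  congr 1
  field_simp
  ring

end TrSum

/-! ### counting -/

section Count

variable {p n d : ℕ} {F : Type} [Field F] [Fintype F] [Algebra (ZMod p) F]

theorem pow_card_self (hF : Fintype.card F = p ^ n) (x : F) : x ^ p ^ n = x := by
  rw [← hF]; exact FiniteField.pow_card x

theorem card_Fd (hp : p.Prime) (hF : Fintype.card F = p ^ n) (hd : 0 < d) (hdn : d ∣ n)
    (hn0 : 0 < n) :
    (Finset.univ.filter fun y : F => y ^ p ^ d = y).card = p ^ d := by
  classical
  have hpd1 : 1 < p ^ d := Nat.one_lt_pow hd.ne' hp.one_lt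
  refine le_antisymm (card_pow_eq_self_le F hpd1) ?_
  -- lower bound via primitive root of unity of order p^d - 1
  have hNcard : Fintype.card Fˣ = p ^ n - 1 := by rw [Fintype.card_units, hF]
  obtain ⟨g, hg⟩ := IsCyclic.exists_generator (α := Fˣ)
  have hog : orderOf g = p ^ n - 1 := by
    rw [orderOf_eq_card_of_forall_mem_zpowers hg, Nat.card_eq_fintype_card, hNcard]
  set N := p ^ n - 1 with hN
  set e' := p ^ d - 1 with he'
  have hpn1 : 1 < p ^ n := Nat.one_lt_pow hn0.ne' hp.one_lt
  have he'N : e' ∣ N := by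
    obtain ⟨t, rfl⟩ := hdn
    have := Nat.sub_dvd_pow_sub_pow (p ^ d) 1 t
    simpa [← pow_mul] using this
  set s := N / e' with hs
  have hNe : e' * s = N := Nat.mul_div_cancel' he'N
  have he'0 : 0 < e' := by omega
  have hs0 : 0 < s := by
    rcases Nat.eq_zero_or_pos s with h | h
    · exfalso; rw [h] at hNe; omega
    · exact h
  have hsN : s ∣ N := ⟨e', by rw [← hNe, Nat.mul_comm]⟩
  have hord : orderOf (g ^ s) = e' := by
    rw [orderOf_pow, hog, Nat.gcd_eq_right hsN, ← hNe, Nat.mul_div_cancel _ hs0]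
  have hprim : IsPrimitiveRoot ((g ^ s : Fˣ) : F) e' := by
    have h1 := IsPrimitiveRoot.orderOf (g ^ s)
    rw [hord] at h1
    exact IsPrimitiveRoot.coe_units_iff.mpr h1
  have hcard := hprim.card_nthRootsFinset
  have hsub : insert (0:F) (Polynomial.nthRootsFinset e' (1:F)) ⊆
      (Finset.univ.filter fun y : F => y ^ p ^ d = y) := by
    intro y hy
    rw [Finset.mem_insert] at hy
    rw [Finset.mem_filter]
    refine ⟨Finset.mem_univ _, ?_⟩
    rcases hy with rfl | hy
    · exact zero_pow (by positivity)
    · have h1 : y ^ e' = 1 := (Polynomial.mem_nthRootsFinset he'0 (1:F)).mp hy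
      have h2 : p ^ d = e' + 1 := by omega
      rw [h2, pow_succ, h1, one_mul]
  have h0 : (0:F) ∉ Polynomial.nthRootsFinset e' (1:F) := by
    intro h
    have h1 : (0:F) ^ e' = 1 := (Polynomial.mem_nthRootsFinset he'0 (1:F)).mp h
    rw [zero_pow he'0.ne'] at h1
    exact one_ne_zero h1.symm
  have := Finset.card_le_card hsub
  rw [Finset.card_insert_of_notMem h0, hcard] at this
  omega

theorem card_fiber_AS (hp : p.Prime) (hF : Fintype.card F = p ^ n) (hd : 0 < d) (hdn : d ∣ n)
    (hn0 : 0 < n) {c y₀ : F} (hy₀ : y₀ ^ p ^ d - y₀ = c) :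
    (Finset.univ.filter fun y : F => y ^ p ^ d - y = c).card = p ^ d := by
  classical
  haveI := Fact.mk hp
  haveI := charP_of_algebra hp F
  have key : (Finset.univ.filter fun y : F => y ^ p ^ d - y = c).card
      = (Finset.univ.filter fun y : F => y ^ p ^ d = y).card := by
    apply Finset.card_bij (fun (b : F) _ => b - y₀)
    · intro b hb
      rw [Finset.mem_filter] at hb ⊢
      refine ⟨Finset.mem_univ _, ?_⟩
      rw [sub_pow_char_pow]
      linear_combination hb.2 - hy₀
    · intro a ha b hb h
      exact sub_left_injective h
    · intro t ht
      rw [Finset.mem_filter] at ht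
      refine ⟨t + y₀, ?_, by ring⟩
      rw [Finset.mem_filter]
      refine ⟨Finset.mem_univ _, ?_⟩
      rw [add_pow_char_pow]
      linear_combination ht.2 + hy₀
  rw [key, card_Fd hp hF hd hdn hn0]
  
theorem exists_AS_iff (hp : p.Prime) (hF : Fintype.card F = p ^ n) (hd : 0 < d) (hdn : d ∣ n)
    (hn0 : 0 < n) (c : F) : (∃ y : F, y ^ p ^ d - y = c) ↔ trSum p d (n / d) c = 0 := by
  classical
  constructor
  · rintro ⟨y, rfl⟩
    rw [trSum_telescope hp, Nat.mul_div_cancel' hdn, pow_card_self hF, sub_self]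
  · intro hc
    have hdln : d ≤ n := Nat.le_of_dvd hn0 hdn
    set Im := Finset.univ.image (fun y : F => y ^ p ^ d - y) with hIm
    have hcount : p ^ n = Im.card * p ^ d := by
      have h1 := Finset.card_eq_sum_card_image (fun y : F => y ^ p ^ d - y) Finset.univ
      rw [Finset.card_univ, hF] at h1
      rw [h1, ← hIm]
      rw [Finset.sum_congr rfl (fun c' hc' => ?_), Finset.sum_const, smul_eq_mul]
      rw [hIm, Finset.mem_image] at hc'
      obtain ⟨y₀, _, hy₀⟩ := hc'
      exact card_fiber_AS hp hF hd hdn hn0 hy₀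
    set KerT := Finset.univ.filter fun c' : F => trSum p d (n / d) c' = 0 with hKerT
    have hImKer : Im ⊆ KerT := by
      intro c' hc'
      rw [hIm, Finset.mem_image] at hc'
      obtain ⟨y₀, _, hy₀⟩ := hc'
      rw [hKerT, Finset.mem_filter]
      refine ⟨Finset.mem_univ _, ?_⟩
      rw [← hy₀, trSum_telescope hp, Nat.mul_div_cancel' hdn, pow_card_self hF, sub_self]
    have hKerLe : KerT.card ≤ p ^ (n - d) := by
      have h1 : 0 < n / d := Nat.div_pos hdln hd
      have := card_trSum_zero_le F hp.one_lt hd h1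
      have h2 : d * (n / d - 1) = n - d := by
        obtain ⟨t, rfl⟩ := hdn
        rcases Nat.eq_zero_or_pos t with h | h
        · subst h; simp
        · rw [Nat.mul_div_cancel_left _ hd, Nat.mul_sub, Nat.mul_one]
      rwa [h2] at this
    have hImCard : Im.card = p ^ (n - d) := by
      have h3 : p ^ (n - d) * p ^ d = p ^ n := by
        rw [← pow_add]
        congr 1
        omega
      have hpd0 : 0 < p ^ d := Nat.pow_pos hp.pos
      apply Nat.eq_of_mul_eq_mul_right hpd0
      omega
    have hEq : Im = KerT := Finset.eq_of_subset_of_card_le hImKer (by omega)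
    have hcKer : c ∈ KerT := by
      rw [hKerT, Finset.mem_filter]; exact ⟨Finset.mem_univ _, hc⟩
    rw [← hEq, hIm, Finset.mem_image] at hcKer
    obtain ⟨y, _, hy⟩ := hcKer
    exact ⟨y, hy⟩

theorem exists_tr_ne (hp : p.Prime) (hF : Fintype.card F = p ^ n) (hd : 0 < d) (hdn : d ∣ n)
    (hn0 : 0 < n) :
    ∃ μ : F, μ ^ p ^ d = μ ∧ trSum p 1 d μ ≠ 0 := by
  classical
  by_contra h
  push_neg at h
  have hsub : (Finset.univ.filter fun y : F => y ^ p ^ d = y) ⊆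
      (Finset.univ.filter fun x : F => trSum p 1 d x = 0) := by
    intro y hy
    rw [Finset.mem_filter] at hy ⊢
    exact ⟨Finset.mem_univ _, h y hy.2⟩
  have h1 := Finset.card_le_card hsub
  rw [card_Fd hp hF hd hdn hn0] at h1
  have h2 := card_trSum_zero_le F hp.one_lt Nat.one_pos hd
  have h3 : p ^ (1 * (d - 1)) < p ^ d := by
    apply Nat.pow_lt_pow_right hp.one_lt
    omega
  omega

theorem trSum_fix_p (hp : p.Prime) (hF : Fintype.card F = p ^ n) (z : F) :
    (trSum p 1 n z) ^ p = trSum p 1 n z := by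
  have h := trSum_frob_fixed hp 1 n (x := z) (by rw [Nat.one_mul]; exact pow_card_self hF z)
  rwa [pow_one] at h

theorem charsum (hp : p.Prime) (hF : Fintype.card F = p ^ n) (hd : 0 < d) (hdn : d ∣ n)
    (hn0 : 0 < n) (c : F) :
    ((Finset.univ.filter fun y : F => y ^ p ^ d - y = c).card : ℂ)
      = ∑ l ∈ Finset.univ.filter (fun l : F => l ^ p ^ d = l),
          expChar p (fToZMod p (trSum p 1 n (l * c))) := by
  classical
  haveI := Fact.mk hp
  haveI := charP_of_algebra hp F
  have hdd : d * (n / d) = n := Nat.mul_div_cancel' hdn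
  set T := trSum p d (n / d) c with hT
  by_cases hex : ∃ y : F, y ^ p ^ d - y = c
  · obtain ⟨y₀, hy₀⟩ := hex
    rw [card_fiber_AS hp hF hd hdn hn0 hy₀]
    have hT0 : T = 0 := (exists_AS_iff hp hF hd hdn hn0 c).mp ⟨y₀, hy₀⟩
    have hterm : ∀ l : F, l ^ p ^ d = l →
        expChar p (fToZMod p (trSum p 1 n (l * c))) = 1 := by
      intro l hl
      rw [← hdd, trSum_decomp hp (n/d) hl c, ← hT, hT0, mul_zero, trSum_zero' hp,
        fToZMod_zero hp, expChar_zero]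
    rw [Finset.sum_congr rfl (fun l hl => hterm l (Finset.mem_filter.mp hl).2),
      Finset.sum_const, card_Fd hp hF hd hdn hn0]
    simp
  · have hc0 : (Finset.univ.filter fun y : F => y ^ p ^ d - y = c).card = 0 := by
      rw [Finset.card_eq_zero, Finset.filter_eq_empty_iff]
      intro y _
      exact fun h => hex ⟨y, h⟩
    have hT0 : T ≠ 0 := fun h => hex ((exists_AS_iff hp hF hd hdn hn0 c).mpr h)
    have hTfix : T ^ p ^ d = T := by
      rw [hT]
      exact trSum_frob_fixed hp d (n/d) (by rw [hdd]; exact pow_card_self hF c)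
    obtain ⟨μ, hμfix, hμ⟩ := exists_tr_ne hp hF hd hdn hn0
    set l₀ := μ * T⁻¹ with hl₀
    have hl₀fix : l₀ ^ p ^ d = l₀ := by
      rw [hl₀, mul_pow, hμfix, inv_pow, hTfix]
    set χ : F → ℂ := fun l => expChar p (fToZMod p (trSum p 1 n (l * c))) with hχ
    have hdecomp : ∀ l : F, l ^ p ^ d = l → trSum p 1 n (l * c) = trSum p 1 d (l * T) := by
      intro l hl
      rw [← hdd, trSum_decomp hp (n/d) hl c, ← hT]
    have hval : trSum p 1 n (l₀ * c) = trSum p 1 d μ := by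
      rw [hdecomp l₀ hl₀fix, hl₀, mul_assoc, inv_mul_cancel₀ hT0, mul_one]
    have hχl₀ : χ l₀ ≠ 1 := by
      rw [hχ]
      simp only []
      rw [hval]
      apply expChar_ne_one hp.one_lt
      apply fToZMod_ne_zero hp _ hμ
      have h := trSum_frob_fixed hp 1 d (x := μ) ?_
      · rwa [pow_one] at h
      · rw [Nat.one_mul]; exact hμfix
    have hhom : ∀ a b : F, χ (a + b) = χ a * χ b := by
      intro a b
      rw [hχ]
      simp only []
      rw [add_mul, trSum_add hp, fToZMod_add hp (trSum_fix_p hp hF _) (trSum_fix_p hp hF _),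
        expChar_add hp.pos.ne']
    set Fd := Finset.univ.filter (fun l : F => l ^ p ^ d = l) with hFd
    have hre : ∑ l ∈ Fd, χ (l₀ + l) = ∑ l ∈ Fd, χ l := by
      apply Finset.sum_nbij' (fun l => l₀ + l) (fun l => l - l₀)
      · intro a ha
        rw [hFd, Finset.mem_filter] at ha ⊢
        exact ⟨Finset.mem_univ _, by rw [add_pow_char_pow, hl₀fix, ha.2]⟩
      · intro a ha
        rw [hFd, Finset.mem_filter] at ha ⊢
        exact ⟨Finset.mem_univ _, by rw [sub_pow_char_pow, hl₀fix, ha.2]⟩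
      · intro a _; ring
      · intro a _; ring
      · intro a _; rfl
    have hfactor : ∀ l : F, χ (l₀ + l) = χ l₀ * χ l := fun l => hhom l₀ l
    have hS : χ l₀ * (∑ l ∈ Fd, χ l) = ∑ l ∈ Fd, χ l := by
      rw [Finset.mul_sum, ← Finset.sum_congr rfl (fun l _ => hfactor l), hre]
    have : (χ l₀ - 1) * (∑ l ∈ Fd, χ l) = 0 := by
      rw [sub_mul, one_mul, hS, sub_self]
    rcases mul_eq_zero.mp this with h | h
    · exact absurd (by linear_combination h) hχl₀
    · rw [hc0, Nat.cast_zero]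
      exact h.symm

end Count

/-! ### number theory -/

theorem nt_parity {m k d : ℕ} (hm : 0 < m) (hd : d = Nat.gcd m k) (h2d : 2*d ∣ m + k) :
    0 < d ∧ m % (2*d) = d % (2*d) ∧ k % (2*d) = d % (2*d) := by
  have d0 : 0 < d := hd ▸ Nat.gcd_pos_of_pos_left k hm
  have hdm : d ∣ m := hd ▸ Nat.gcd_dvd_left m k
  have hdk : d ∣ k := hd ▸ Nat.gcd_dvd_right m k
  obtain ⟨M, hM⟩ := hdm
  obtain ⟨K, hK⟩ := hdk
  have cop : Nat.gcd M K = 1 := by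
    have := Nat.coprime_div_gcd_div_gcd (m := m) (n := k) (hd ▸ d0)
    rw [← hd, hM, hK, Nat.mul_div_cancel_left _ d0, Nat.mul_div_cancel_left _ d0] at this
    exact this
  have hsum : 2 ∣ M + K := by
    obtain ⟨t, ht⟩ := h2d
    have hMK : d * (M + K) = d * (2 * t) := by
      rw [Nat.mul_add, ← hM, ← hK, ht]; ring
    exact ⟨t, Nat.eq_of_mul_eq_mul_left d0 hMK⟩
  have hModd : M % 2 = 1 := by
    rcases Nat.even_or_odd M with hMe | hMo
    · exfalso
      have h2M : 2 ∣ M := hMe.two_dvd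
      have hKe : 2 ∣ K := (Nat.dvd_add_right h2M).mp hsum
      have h2g : 2 ∣ Nat.gcd M K := Nat.dvd_gcd h2M hKe
      rw [cop] at h2g
      omega
    · exact Nat.odd_iff.mp hMo
  have hKodd : K % 2 = 1 := by omega
  constructor
  · exact d0
  constructor
  · obtain ⟨a, ha⟩ : ∃ a, M = 2*a + 1 := ⟨M/2, by omega⟩
    have : m = d + (2*d)*a := by rw [hM, ha]; ring
    rw [this, Nat.add_mul_mod_self_left]
  · obtain ⟨a, ha⟩ : ∃ a, K = 2*a + 1 := ⟨K/2, by omega⟩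
    have : k = d + (2*d)*a := by rw [hK, ha]; ring
    rw [this, Nat.add_mul_mod_self_left]

theorem modeq_pow_p {p e j : ℕ} (hp : 1 < p) (he : 0 < e) (hj : j % (2*e) = e % (2*e)) :
    p ^ j ≡ p ^ e [MOD p ^ (2*e) - 1] := by
  have he2 : e % (2*e) = e := Nat.mod_eq_of_lt (by omega)
  have hdm := Nat.div_add_mod j (2*e)
  obtain ⟨a, ha⟩ : ∃ a, j = e + (2*e)*a := ⟨j / (2*e), by omega⟩
  have h1 : 1 ≤ p ^ (2*e) := Nat.one_le_pow _ _ (by omega)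
  have hmod : p ^ (2*e) ≡ 1 [MOD p ^ (2*e) - 1] := ((Nat.modEq_iff_dvd' h1).mpr dvd_rfl).symm
  calc p ^ j = p ^ e * (p ^ (2*e)) ^ a := by rw [ha, pow_add, pow_mul]
    _ ≡ p ^ e * 1 ^ a [MOD p ^ (2*e) - 1] := Nat.ModEq.mul_left _ (hmod.pow a)
    _ = p ^ e := by rw [one_pow, Nat.mul_one]

theorem pow2e_factor {p e : ℕ} (hp : 1 < p) (he : 0 < e) :
    (p ^ e + 1) * (p ^ e - 1) = p ^ (2*e) - 1 := by
  have h1 : 1 ≤ p ^ e := Nat.one_le_pow _ _ (by omega)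
  obtain ⟨b, hb⟩ : ∃ b, p ^ e = b + 1 := ⟨p ^ e - 1, by omega⟩
  have h2 : p ^ (2*e) = (p ^ e) * (p ^ e) := by rw [two_mul, pow_add]
  rw [h2, hb]
  have h3 : (b+1)*(b+1) = b*b + 2*b + 1 := by ring
  have h4 : (b+1+1)*(b+1-1) = b*b + 2*b := by
    have : b+1-1 = b := by omega
    rw [this]; ring
  omega

/-! ### existence of the substitution element u -/

theorem exists_u {p n d : ℕ} {F : Type} [Field F] [Fintype F] (hp : p.Prime)
    (hF : Fintype.card F = p ^ n) (hd : 0 < d) (h2dn : 2*d ∣ n) (hn0 : 0 < n)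
    {l : F} (hl0 : l ≠ 0) (hl : l ^ p ^ d = l) :
    ∃ u : F, u ≠ 0 ∧ ∀ j : ℕ, j % (2*d) = d % (2*d) → u ^ (p ^ j + 1) = l := by
  classical
  have hp1 : 1 < p := hp.one_lt
  set N := p ^ n - 1 with hN
  set E2 := p ^ (2*d) - 1 with hE2
  set e := p ^ d - 1 with he
  have hpn1 : 1 < p ^ n := Nat.one_lt_pow hn0.ne' hp1
  have hpd1 : 1 < p ^ d := Nat.one_lt_pow hd.ne' hp1
  have hpE1 : 1 < p ^ (2*d) := Nat.one_lt_pow (by omega) hp1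
  have hE2N : E2 ∣ N := by
    obtain ⟨t, ht⟩ := h2dn
    have := Nat.sub_dvd_pow_sub_pow (p ^ (2*d)) 1 t
    rw [← pow_mul, one_pow, ← ht] at this
    exact this
  have hfact : E2 = (p ^ d + 1) * e := (pow2e_factor hp1 hd).symm
  have heN : e ∣ N := Dvd.dvd.trans ⟨p ^ d + 1, by rw [hfact, Nat.mul_comm]⟩ hE2N
  set s' := N / E2 with hs'
  set s := N / e with hs
  have hNE2 : E2 * s' = N := Nat.mul_div_cancel' hE2N
  have hNe : e * s = N := Nat.mul_div_cancel' heN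
  have he0 : 0 < e := by omega
  have hsfact : s = s' * (p ^ d + 1) := by
    apply Nat.eq_of_mul_eq_mul_left he0
    rw [hNe, ← hNE2, hfact]
    ring
  -- generator
  have hNcard : Fintype.card Fˣ = N := by rw [Fintype.card_units, hF]
  obtain ⟨g, hg⟩ := IsCyclic.exists_generator (α := Fˣ)
  have hog : orderOf g = N := by
    rw [orderOf_eq_card_of_forall_mem_zpowers hg, Nat.card_eq_fintype_card, hNcard]
  set lu := Units.mk0 l hl0 with hlu
  obtain ⟨i₀, hi₀⟩ := Subgroup.mem_zpowers_iff.mp (hg lu)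
  have hlpow : lu ^ e = 1 := by
    have h1 : l ^ e * l = l := by
      rw [← pow_succ, he]
      have : p ^ d - 1 + 1 = p ^ d := by omega
      rw [this, hl]
    have h2 : l ^ e = 1 := by
      have := mul_right_cancel₀ hl0 (h1.trans (one_mul l).symm)
      exact this
    ext
    rw [Units.val_pow_eq_pow_val]
    exact h2
  have hdvd1 : ((N:ℕ):ℤ) ∣ i₀ * (e:ℤ) := by
    rw [← hog]
    rw [orderOf_dvd_iff_zpow_eq_one]
    rw [zpow_mul, hi₀]
    rw [show ((e:ℕ):ℤ) = (e:ℤ) from rfl]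
    rw [zpow_natCast, hlpow]
  have hsd : (s:ℤ) ∣ i₀ := by
    have h1 : ((s:ℤ) * (e:ℤ)) ∣ i₀ * (e:ℤ) := by
      rw [show (s:ℤ) * (e:ℤ) = ((e * s : ℕ) : ℤ) by push_cast; ring, hNe]
      exact hdvd1
    have he0' : (e:ℤ) ≠ 0 := by exact_mod_cast he0.ne'
    exact (mul_dvd_mul_iff_right he0').mp h1
  obtain ⟨i₂, hi₂⟩ := hsd
  set w := (s' : ℤ) * i₂ with hw
  set u := g ^ w with hu
  have hukey : u ^ (p ^ d + 1) = lu := by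
    rw [hu, ← zpow_natCast (g ^ w) (p ^ d + 1), ← zpow_mul]
    have : w * ((p ^ d + 1 : ℕ) : ℤ) = i₀ := by
      rw [hw, hi₂, hsfact]
      push_cast
      ring
    rw [this, hi₀]
  have huE2 : u ^ E2 = 1 := by
    rw [hu, ← zpow_natCast (g ^ w) E2, ← zpow_mul]
    have : w * (E2 : ℤ) = (N : ℤ) * i₂ := by
      rw [hw, ← hNE2]
      push_cast
      ring
    rw [this, zpow_mul, zpow_natCast]
    have hgN : g ^ N = 1 := by rw [← hog]; exact pow_orderOf_eq_one g
    rw [hgN, one_zpow]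
  have hordu : orderOf u ∣ E2 := orderOf_dvd_of_pow_eq_one huE2
  refine ⟨(u : F), Units.ne_zero u, ?_⟩
  intro j hj
  have hmj : p ^ j + 1 ≡ p ^ d + 1 [MOD E2] := Nat.ModEq.add_right 1 (modeq_pow_p hp1 hd hj)
  have hmj' : p ^ j + 1 ≡ p ^ d + 1 [MOD orderOf u] := Nat.ModEq.of_dvd hordu hmj
  have hpowj : u ^ (p ^ j + 1) = u ^ (p ^ d + 1) := pow_eq_pow_iff_modEq.mpr hmj'
  have : u ^ (p ^ j + 1) = lu := by rw [hpowj, hukey]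
  calc (u : F) ^ (p ^ j + 1) = ((u ^ (p ^ j + 1) : Fˣ) : F) := by
        rw [Units.val_pow_eq_pow_val]
    _ = ((lu : Fˣ) : F) := by rw [this]
    _ = l := rfl

/-! ### main counting reduction -/

theorem main_count {p n d : ℕ} {F : Type} [Field F] [Fintype F] [Algebra (ZMod p) F]
    (hp : p.Prime) (hF : Fintype.card F = p ^ n) (hd : 0 < d) (hdn : d ∣ n) (hn0 : 0 < n)
    (f : F → F) :
    ((Nat.card {xy : F × F // f xy.1 = xy.2 ^ p ^ d - xy.2} : ℕ) : ℂ)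
      = ∑ l ∈ Finset.univ.filter (fun l : F => l ^ p ^ d = l),
          ∑ x : F, expChar p (fToZMod p (trSum p 1 n (l * f x))) := by
  classical
  rw [Nat.card_eq_fintype_card, Fintype.card_subtype]
  have hfib := Finset.card_eq_sum_card_fiberwise (f := Prod.fst)
    (s := Finset.univ.filter fun xy : F × F => f xy.1 = xy.2 ^ p ^ d - xy.2)
    (t := (Finset.univ : Finset F)) (fun x _ => Finset.mem_univ _)
  have hpt : ∀ x : F,
      ((Finset.univ.filter fun xy : F × F => f xy.1 = xy.2 ^ p ^ d - xy.2).filter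
        (fun xy => xy.1 = x)).card
      = (Finset.univ.filter fun y : F => y ^ p ^ d - y = f x).card := by
    intro x
    apply Finset.card_bij (fun xy _ => xy.2)
    · intro xy hxy
      rw [Finset.mem_filter, Finset.mem_filter] at hxy
      rw [Finset.mem_filter]
      refine ⟨Finset.mem_univ _, ?_⟩
      rw [← hxy.2, ← hxy.1.2]
    · intro a ha b hb hab
      rw [Finset.mem_filter] at ha hb
      exact Prod.ext (ha.2.trans hb.2.symm) hab
    · intro y hy
      rw [Finset.mem_filter] at hy
      refine ⟨(x, y), ?_, rfl⟩
      rw [Finset.mem_filter, Finset.mem_filter]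
      exact ⟨⟨Finset.mem_univ _, hy.2.symm⟩, rfl⟩
  rw [hfib, Finset.sum_congr rfl (fun x _ => hpt x)]
  push_cast
  rw [Finset.sum_congr rfl (fun x _ => charsum hp hF hd hdn hn0 (f x)), Finset.sum_comm]

end S6

open S6 in
theorem stmt6 (p m k n d d' : ℕ) (hp : Nat.Prime p) (hodd : p % 2 = 1)
    (hm : 0 < m) (hn : n = 2 * m) (hk : k ≤ n - 1) (hkm : k ≠ m)
    (hd : d = Nat.gcd m k) (hd' : d' = Nat.gcd (m + k) (2 * k))
    (F : Type) [Field F] [Fintype F] [Algebra (ZMod p) F] (hF : Fintype.card F = p ^ n) (hcase : d' = 2 * d)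
    (α β : F) (hα : α ^ p ^ m = α) (hne : ¬(α = 0 ∧ β = 0)) :
    (Nat.card {xy : F × F // (2 : F)⁻¹ * α * xy.1 ^ (p ^ m + 1) + β * xy.1 ^ (p ^ k + 1)
        = xy.2 ^ p ^ d - xy.2} : ℂ)
      = (p : ℂ) ^ n + ((p : ℂ) ^ d - 1) * Tsum p m n k F α β := by
  classical
  haveI := Fact.mk hp
  haveI := charP_of_algebra hp F
  have hn0 : 0 < n := by omega
  have h2d : 2*d ∣ m + k := by
    have h1 : d' ∣ m + k := hd' ▸ Nat.gcd_dvd_left (m+k) (2*k)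
    rwa [hcase] at h1
  obtain ⟨d0, hmmod, hkmod⟩ := nt_parity hm hd h2d
  have hdm : d ∣ m := hd ▸ Nat.gcd_dvd_left m k
  have h2dn : 2*d ∣ n := by
    obtain ⟨t, ht⟩ := hdm
    exact ⟨t, by rw [hn, ht]; ring⟩
  have hdn : d ∣ n := dvd_trans (dvd_mul_left d 2) h2dn
  have key := main_count hp hF d0 hdn hn0
    (fun x : F => (2:F)⁻¹ * α * x ^ (p ^ m + 1) + β * x ^ (p ^ k + 1))
  rw [key]
  -- split the sum over l
  set Fd := Finset.univ.filter (fun l : F => l ^ p ^ d = l) with hFd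
  have h0Fd : (0:F) ∈ Fd := by
    rw [hFd, Finset.mem_filter]
    exact ⟨Finset.mem_univ _, by rw [zero_pow (pow_ne_zero _ hp.pos.ne')]⟩
  rw [← Finset.sum_erase_add Fd _ h0Fd]
  -- the l = 0 term
  have hzero : ∑ x : F, expChar p (fToZMod p (trSum p 1 n ((0:F) *
      ((2:F)⁻¹ * α * x ^ (p ^ m + 1) + β * x ^ (p ^ k + 1))))) = (p:ℂ)^n := by
    have : ∀ x : F, expChar p (fToZMod p (trSum p 1 n ((0:F) *
        ((2:F)⁻¹ * α * x ^ (p ^ m + 1) + β * x ^ (p ^ k + 1))))) = 1 := by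
      intro x
      rw [zero_mul, trSum_zero' hp, fToZMod_zero hp, expChar_zero]
    rw [Finset.sum_congr rfl (fun x _ => this x), Finset.sum_const, Finset.card_univ, hF]
    push_cast
    ring
  rw [hzero]
  -- the l ≠ 0 terms
  have hterm : ∀ l ∈ Fd.erase 0,
      ∑ x : F, expChar p (fToZMod p (trSum p 1 n (l *
        ((2:F)⁻¹ * α * x ^ (p ^ m + 1) + β * x ^ (p ^ k + 1)))))
      = Tsum p m n k F α β := by
    intro l hl
    have hl0 : l ≠ 0 := Finset.ne_of_mem_erase hl
    have hlFd : l ^ p ^ d = l := (Finset.mem_filter.mp (Finset.mem_of_mem_erase hl)).2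
    have hinv0 : l⁻¹ ≠ 0 := inv_ne_zero hl0
    have hinvFd : (l⁻¹) ^ p ^ d = l⁻¹ := by rw [inv_pow, hlFd]
    obtain ⟨u, hu0, hu⟩ := exists_u hp hF d0 h2dn hn0 hinv0 hinvFd
    have huk := hu k hkmod
    have hum := hu m hmmod
    rw [Tsum]
    refine (Fintype.sum_bijective (fun x : F => u * x) (mulLeft_bijective₀ u hu0) _ _ ?_).symm
    intro x
    -- LHS (Tsum summand at x) = RHS (our summand at u * x)
    have harg : l * ((2:F)⁻¹ * α * (u*x) ^ (p ^ m + 1) + β * (u*x) ^ (p ^ k + 1))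
        = (2:F)⁻¹ * (α * x ^ (p ^ m + 1)) + β * x ^ (p ^ k + 1) := by
      have h1 : l * ((2:F)⁻¹ * α * (u*x) ^ (p ^ m + 1) + β * (u*x) ^ (p ^ k + 1))
          = (l * l⁻¹) * ((2:F)⁻¹ * (α * x ^ (p ^ m + 1)) + β * x ^ (p ^ k + 1)) := by
        rw [mul_pow, mul_pow, hum, huk]
        ring
      rw [h1, mul_inv_cancel₀ hl0, one_mul]
    have hw : (α * x ^ (p ^ m + 1)) ^ p ^ m = α * x ^ (p ^ m + 1) := by
      rw [mul_pow, hα, ← pow_mul]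
      congr 1
      have hexp : (p ^ m + 1) * p ^ m = p ^ n + p ^ m := by
        rw [hn, Nat.add_mul, Nat.one_mul, ← pow_add, two_mul]
      rw [hexp, pow_add, pow_card_self hF, pow_succ]
      ring
    have hsplit : trSum p 1 n (l * ((2:F)⁻¹ * α * (u*x) ^ (p ^ m + 1) + β * (u*x) ^ (p ^ k + 1)))
        = trSum p 1 m (α * x ^ (p ^ m + 1)) + trSum p 1 n (β * x ^ (p ^ k + 1)) := by
      rw [harg, trSum_add hp]
      congr 1
      have hnm : n = m + m := by omega
      rw [hnm]
      exact trSum_half hp hodd m hw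
    rw [hsplit]
    have hfix1 : (trSum p 1 m (α * x ^ (p ^ m + 1))) ^ p = trSum p 1 m (α * x ^ (p ^ m + 1)) := by
      have h := trSum_frob_fixed hp 1 m (x := α * x ^ (p ^ m + 1)) (by rw [Nat.one_mul]; exact hw)
      rwa [pow_one] at h
    rw [fToZMod_add hp hfix1 (trSum_fix_p hp hF _)]
  rw [Finset.sum_congr rfl hterm, Finset.sum_const]
  have hcardFd : Fd.card = p ^ d := card_Fd hp hF d0 hdn hn0
  have hcarde : (Fd.erase 0).card = p ^ d - 1 := by
    rw [Finset.card_erase_of_mem h0Fd, hcardFd]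
  rw [hcarde]
  have hpd1 : 1 ≤ p ^ d := Nat.one_le_pow _ _ hp.pos
  rw [nsmul_eq_mul]
  push_cast [Nat.cast_sub hpd1]
  ring
end
end

section
/- Suppose d' = 2d and (α,β) ∈ F_{p^m} × F_q with (α,β) ≠ (0,0). Then there exists an integer z such that, as complex numbers, T(α,β) = 1 + (p^d + 1)·z; that is, T(α,β) is a rational integer congruent to 1 modulo p^d + 1. -/
open scoped BigOperators Classical

noncomputable section

-- L0: fToZMod of algebraMap
lemma fToZMod_algebraMap (p : ℕ) (hp : p.Prime) {F : Type} [Field F] [Algebra (ZMod p) F]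
    (c : ZMod p) : fToZMod p (algebraMap (ZMod p) F c) = c := by
  haveI := Fact.mk hp
  have hA : Function.Injective (algebraMap (ZMod p) F) := (algebraMap (ZMod p) F).injective
  exact Function.leftInverse_invFun hA c

-- L1: elements fixed by Frobenius are in the prime field
lemma exists_algebraMap_of_pow (p : ℕ) (hp : p.Prime) {F : Type} [Field F] [Algebra (ZMod p) F]
    (y : F) (hy : y ^ p = y) : ∃ c : ZMod p, algebraMap (ZMod p) F c = y := by
  haveI := Fact.mk hp
  classical
  set A := algebraMap (ZMod p) F with hAdef
  have hA : Function.Injective A := (algebraMap (ZMod p) F).injective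
  set P : Polynomial F := Polynomial.X ^ p - Polynomial.X with hP
  have hPne : P ≠ 0 := by
    intro h
    have : P.coeff p = 0 := by rw [h]; simp
    rw [hP] at this
    simp only [Polynomial.coeff_sub, Polynomial.coeff_X_pow, if_pos rfl,
      Polynomial.coeff_X, if_neg (hp.one_lt.ne : (1:ℕ) ≠ p)] at this
    norm_num at this
  have hdeg : P.natDegree ≤ p := by
    refine le_trans (Polynomial.natDegree_sub_le _ _) ?_
    simp [Polynomial.natDegree_X_pow, Polynomial.natDegree_X, hp.one_lt.le]
  have hroot : ∀ c : ZMod p, P.IsRoot (A c) := by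
    intro c
    have : (A c) ^ p = A c := by rw [← map_pow, ZMod.pow_card]
    simp [hP, Polynomial.IsRoot, this]
  set S : Finset F := Finset.univ.image A with hS
  have hScard : S.card = p := by
    rw [hS, Finset.card_image_of_injective _ hA, Finset.card_univ, ZMod.card]
  have hsub : S ⊆ P.roots.toFinset := by
    intro x hx
    rw [hS, Finset.mem_image] at hx
    obtain ⟨c, _, rfl⟩ := hx
    rw [Multiset.mem_toFinset, Polynomial.mem_roots hPne]
    exact hroot c
  have hcard2 : P.roots.toFinset.card ≤ p :=
    le_trans (Multiset.toFinset_card_le _) (le_trans (Polynomial.card_roots' P) hdeg)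
  have hEq : S = P.roots.toFinset :=
    Finset.eq_of_subset_of_card_le hsub (by rw [hScard]; exact hcard2)
  have hy' : y ∈ P.roots.toFinset := by
    rw [Multiset.mem_toFinset, Polynomial.mem_roots hPne]
    simp [hP, Polynomial.IsRoot, hy]
  rw [← hEq, hS, Finset.mem_image] at hy'
  obtain ⟨c, _, hc⟩ := hy'
  exact ⟨c, hc⟩

-- L2: trSum value is Frobenius-fixed
lemma trSum_pow_p (p : ℕ) (hp : p.Prime) (r : ℕ) {F : Type} [Field F] [CharP F p]
    (w : F) (hw : w ^ p ^ r = w) : (trSum p 1 r w) ^ p = trSum p 1 r w := by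
  haveI := Fact.mk hp
  have h1 : trSum p 1 r w = ∑ i ∈ Finset.range r, w ^ p ^ i := by
    simp [trSum, one_mul]
  rw [h1]
  have h2 : (∑ i ∈ Finset.range r, w ^ p ^ i) ^ p
      = ∑ i ∈ Finset.range r, w ^ p ^ (i + 1) := by
    have := map_sum (frobenius F p) (fun i => w ^ p ^ i) (Finset.range r)
    simp only [frobenius_def] at this
    rw [this]
    refine Finset.sum_congr rfl fun i _ => ?_
    rw [← pow_mul, ← pow_succ]
  rw [h2]
  have h3 : ∑ i ∈ Finset.range (r + 1), w ^ p ^ i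
      = ∑ i ∈ Finset.range r, w ^ p ^ (i + 1) + w ^ p ^ 0 := Finset.sum_range_succ' _ r
  have h4 : ∑ i ∈ Finset.range (r + 1), w ^ p ^ i
      = ∑ i ∈ Finset.range r, w ^ p ^ i + w ^ p ^ r := Finset.sum_range_succ _ r
  rw [h4, hw] at h3
  simp only [pow_zero, pow_one] at h3
  exact (add_right_cancel h3).symm

-- L3: trSum commutes with prime-field scalars
lemma trSum_mul_prime (p r : ℕ) {F : Type} [Field F] (u w : F) (hu : u ^ p = u) :
    trSum p 1 r (u * w) = u * trSum p 1 r w := by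
  have hui : ∀ i : ℕ, u ^ p ^ i = u := by
    intro i
    induction i with
    | zero => simp
    | succ i ih => rw [pow_succ, pow_mul, ih, hu]
  simp only [trSum, one_mul, Finset.mul_sum]
  exact Finset.sum_congr rfl fun i _ => by rw [mul_pow, hui]

-- L4: coset divisibility
lemma coset_dvd {F : Type} [Field F] (v : F) (e : ℕ) (he : 0 < e) (hve : v ^ e = 1)
    (hinj : ∀ a b : ℕ, a < e → b < e → v ^ a = v ^ b → a = b) :
    ∀ S : Finset F, (∀ x ∈ S, x ≠ 0) → (∀ x ∈ S, v * x ∈ S) → e ∣ S.card := by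
  classical
  have hv0 : v ≠ 0 := by
    intro h; rw [h, zero_pow he.ne'] at hve; exact zero_ne_one hve
  intro S
  induction S using Finset.strongInduction with
  | _ S ih =>
    intro h0 hclosed
    by_cases hS : S = ∅
    · simp [hS]
    obtain ⟨x, hx⟩ := Finset.nonempty_iff_ne_empty.mpr hS
    have hxne : x ≠ 0 := h0 x hx
    have hpowmem : ∀ j : ℕ, v ^ j * x ∈ S := by
      intro j
      induction j with
      | zero => simpa using hx
      | succ j ihj =>
        have := hclosed _ ihj
        rwa [← mul_assoc, mul_comm v (v ^ j), ← pow_succ] at this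
    set C : Finset F := (Finset.range e).image (fun j => v ^ j * x) with hC
    have hCS : C ⊆ S := by
      intro y hy
      rw [hC, Finset.mem_image] at hy
      obtain ⟨j, _, rfl⟩ := hy
      exact hpowmem j
    have hCcard : C.card = e := by
      rw [hC, Finset.card_image_of_injOn, Finset.card_range]
      intro a ha b hb hab
      simp only [Finset.coe_range, Set.mem_Iio] at ha hb
      exact hinj a b ha hb (mul_right_cancel₀ hxne hab)
    have hxC : x ∈ C := by
      rw [hC, Finset.mem_image]
      exact ⟨0, Finset.mem_range.mpr he, by simp⟩
    have hss : S \ C ⊂ S := Finset.sdiff_ssubset hCS ⟨x, hxC⟩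
    have hclosed' : ∀ y ∈ S \ C, v * y ∈ S \ C := by
      intro y hy
      obtain ⟨hyS, hyC⟩ := Finset.mem_sdiff.mp hy
      refine Finset.mem_sdiff.mpr ⟨hclosed y hyS, ?_⟩
      intro hvy
      rw [hC, Finset.mem_image] at hvy
      obtain ⟨j, hj, hje⟩ := hvy
      apply hyC
      rw [hC, Finset.mem_image]
      cases j with
      | zero =>
        refine ⟨e - 1, Finset.mem_range.mpr (by omega), ?_⟩
        have : v * (v ^ (e - 1) * x) = v * y := by
          rw [← mul_assoc, ← pow_succ', Nat.sub_add_cancel he, hve, one_mul]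
          simpa using hje
        exact (mul_left_cancel₀ hv0 this)
      | succ j =>
        refine ⟨j, Finset.mem_range.mpr (by exact lt_trans (Nat.lt_succ_self j) (Finset.mem_range.mp hj)), ?_⟩
        have : v * (v ^ j * x) = v * y := by
          rw [← mul_assoc, ← pow_succ']
          exact hje
        exact (mul_left_cancel₀ hv0 this)
    obtain ⟨a, ha⟩ := ih (S \ C) hss (fun y hy => h0 y (Finset.mem_sdiff.mp hy).1) hclosed'
    have hcard : S.card = (S \ C).card + C.card := (Finset.card_sdiff_add_card_eq_card hCS).symm
    exact ⟨a + 1, by rw [hcard, ha, hCcard]; ring⟩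

lemma expChar_zero (p : ℕ) [NeZero p] : expChar p 0 = 1 := by
  simp [expChar, ZMod.val_zero]

lemma expChar_eq_pow (p : ℕ) (hp : p.Prime) (c : ZMod p) :
    expChar p c = Complex.exp (2 * Real.pi * Complex.I / (p : ℂ)) ^ (c.val) := by
  rw [← Complex.exp_nat_mul, expChar]
  congr 1
  have : (p : ℂ) ≠ 0 := by exact_mod_cast hp.ne_zero
  field_simp

lemma expChar_sum (p : ℕ) (hp : p.Prime) [NeZero p] : ∑ c : ZMod p, expChar p c = 0 := by
  haveI := Fact.mk hp
  have hζ : IsPrimitiveRoot (Complex.exp (2 * Real.pi * Complex.I / (p : ℂ))) p :=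
    Complex.isPrimitiveRoot_exp p hp.ne_zero
  have h1 : ∑ c : ZMod p, expChar p c
      = ∑ i ∈ Finset.range p, Complex.exp (2 * Real.pi * Complex.I / (p : ℂ)) ^ i := by
    rw [Finset.sum_congr rfl (fun c _ => expChar_eq_pow p hp c)]
    refine Finset.sum_nbij (fun c => c.val) ?_ ?_ ?_ ?_
    · intro c _; exact Finset.mem_range.mpr (ZMod.val_lt c)
    · intro a _ b _ h; exact ZMod.val_injective p h
    · intro i hi
      refine ⟨(i : ZMod p), Finset.mem_coe.mpr (Finset.mem_univ _), ?_⟩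
      exact ZMod.val_cast_of_lt (Finset.mem_range.mp hi)
    · intro c _; rfl
  rw [h1, hζ.geom_sum_eq_zero hp.one_lt]

end

theorem stmt7 (p m k n d d' : ℕ) (hp : Nat.Prime p) (hodd : p % 2 = 1)
    (hm : 0 < m) (hn : n = 2 * m) (hk : k ≤ n - 1) (hkm : k ≠ m)
    (hd : d = Nat.gcd m k) (hd' : d' = Nat.gcd (m + k) (2 * k))
    (F : Type) [Field F] [Fintype F] [Algebra (ZMod p) F] (hF : Fintype.card F = p ^ n) (hcase : d' = 2 * d)
    (α β : F) (hα : α ^ p ^ m = α) (hne : ¬(α = 0 ∧ β = 0)) :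
    ∃ z : ℤ, Tsum p m n k F α β = 1 + ((p : ℂ) ^ d + 1) * (z : ℂ) := by
  classical
  haveI := Fact.mk hp
  haveI : NeZero p := ⟨hp.ne_zero⟩
  haveI : CharP F p := charP_of_injective_algebraMap (algebraMap (ZMod p) F).injective p
  set A := algebraMap (ZMod p) F with hA
  have hp2 : 2 ≤ p := hp.two_le
  -- number theory on exponents
  have hd_pos : 0 < d := by
    rw [hd]; exact Nat.gcd_pos_of_pos_left k hm
  have hdm : d ∣ m := hd ▸ Nat.gcd_dvd_left m k
  have hdk : d ∣ k := hd ▸ Nat.gcd_dvd_right m k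
  obtain ⟨m', hm'⟩ := hdm
  obtain ⟨k', hk'⟩ := hdk
  have hg2 : Nat.gcd (m' + k') (2 * k') = 2 := by
    have h1 : d' = d * Nat.gcd (m' + k') (2 * k') := by
      rw [hd', hm', hk', show d * m' + d * k' = d * (m' + k') by ring,
        show 2 * (d * k') = d * (2 * k') by ring, Nat.gcd_mul_left]
    have h2 : d * Nat.gcd (m' + k') (2 * k') = d * 2 := by
      rw [← h1, hcase]; ring
    exact Nat.eq_of_mul_eq_mul_left hd_pos h2
  have hco : Nat.Coprime m' k' := by
    have := Nat.coprime_div_gcd_div_gcd (hd ▸ hd_pos : 0 < Nat.gcd m k)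
    have em : m / Nat.gcd m k = m' := by rw [← hd, hm']; exact Nat.mul_div_cancel_left m' hd_pos
    have ek : k / Nat.gcd m k = k' := by rw [← hd, hk']; exact Nat.mul_div_cancel_left k' hd_pos
    rwa [em, ek] at this
  have h2sum : 2 ∣ m' + k' := hg2 ▸ Nat.gcd_dvd_left _ _
  have hm'odd : m' % 2 = 1 ∧ k' % 2 = 1 := by
    rcases Nat.even_or_odd m' with hme | hmo
    · rw [Nat.even_iff] at hme
      have : (2 : ℕ) ∣ Nat.gcd m' k' := Nat.dvd_gcd (by omega) (by omega)
      rw [hco] at this; omega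
    · rw [Nat.odd_iff] at hmo
      exact ⟨hmo, by omega⟩
  obtain ⟨hmo, hko⟩ := hm'odd
  have hm'pos : 0 < m' := by
    rcases Nat.eq_zero_or_pos m' with h | h
    · rw [h, mul_zero] at hm'; omega
    · exact h
  -- decompositions m = d + 2*d*a2, k = d + 2*d*b2
  obtain ⟨a2, ha2'⟩ : ∃ a2, m' = 2 * a2 + 1 := ⟨(m' - 1) / 2, by omega⟩
  obtain ⟨b2, hb2'⟩ : ∃ b2, k' = 2 * b2 + 1 := ⟨(k' - 1) / 2, by omega⟩
  have ha2 : m = d + 2 * d * a2 := by rw [hm', ha2']; ring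
  have hb2 : k = d + 2 * d * b2 := by rw [hk', hb2']; ring
  -- numeric facts
  have hpd2 : 2 ≤ p ^ d := le_trans hp2 (Nat.le_self_pow hd_pos.ne' p)
  have hfact : p ^ (2 * d) - 1 = (p ^ d + 1) * (p ^ d - 1) := by
    rw [show 2 * d = d * 2 by ring, pow_mul, ← Nat.sq_sub_sq (p ^ d) 1, one_pow]
  set e : ℕ := p ^ d + 1 with he
  set N : ℕ := Fintype.card F - 1 with hNdef
  have hNq : N = p ^ n - 1 := by rw [hNdef, hF]
  have hqn2 : 2 ≤ p ^ n := le_trans hp2 (Nat.le_self_pow (by omega) p)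
  have hN_pos : 0 < N := by omega
  have hdvd2dn : (p ^ (2 * d) - 1) ∣ N := by
    rw [hNq, show n = 2 * d * m' by rw [hn, hm']; ring,
      show p ^ (2 * d * m') = (p ^ (2 * d)) ^ m' from pow_mul p (2 * d) m']
    have := Nat.sub_dvd_pow_sub_pow (p ^ (2 * d)) 1 m'
    rwa [one_pow] at this
  have hdvd_d1 : (p ^ d - 1) ∣ N :=
    dvd_trans ⟨p ^ d + 1, by rw [hfact]; ring⟩ hdvd2dn
  have he_dvdN : e ∣ N := dvd_trans ⟨p ^ d - 1, hfact⟩ hdvd2dn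
  -- decomposition of p^m+1 and p^k+1
  have hdec : ∀ j : ℕ, (∃ c2, j = d + 2 * d * c2) →
      ∃ r, p ^ j + 1 = (p ^ d + 1) + (p ^ (2 * d) - 1) * r := by
    rintro j ⟨c2, rfl⟩
    obtain ⟨r0, hr0⟩ : (p ^ (2 * d) - 1) ∣ (p ^ (2 * d)) ^ c2 - 1 := by
      have := Nat.sub_dvd_pow_sub_pow (p ^ (2 * d)) 1 c2
      rwa [one_pow] at this
    have h1le : 1 ≤ (p ^ (2 * d)) ^ c2 := Nat.one_le_pow _ _ (by positivity)
    have hA' : (p ^ (2 * d)) ^ c2 = (p ^ (2 * d) - 1) * r0 + 1 := by omega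
    refine ⟨p ^ d * r0, ?_⟩
    rw [pow_add, show p ^ (2 * d * c2) = (p ^ (2 * d)) ^ c2 from pow_mul p (2 * d) c2, hA']
    ring
  obtain ⟨rm, hrm⟩ := hdec m ⟨a2, ha2⟩
  obtain ⟨rk, hrk⟩ := hdec k ⟨b2, hb2⟩
  have lift : ∀ (c : F) (w : F), c ^ (p ^ d + 1) = w → c ^ (p ^ (2 * d) - 1) = 1 →
      c ^ (p ^ m + 1) = w ∧ c ^ (p ^ k + 1) = w := by
    intro c w h1 h2
    constructor
    · rw [hrm, pow_add, h1, pow_mul, h2, one_pow, mul_one]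
    · rw [hrk, pow_add, h1, pow_mul, h2, one_pow, mul_one]
  -- the phase function
  set f : F → ZMod p := fun x => fToZMod p (trSum p 1 m (α * x ^ (p ^ m + 1))) +
      fToZMod p (trSum p 1 n (β * x ^ (p ^ k + 1))) with hf
  have hTf : Tsum p m n k F α β = ∑ x : F, expChar p (f x) := rfl
  have hxq : ∀ x : F, x ^ (p ^ n) = x := fun x => by rw [← hF]; exact FiniteField.pow_card x
  have hw_m : ∀ x : F, (α * x ^ (p ^ m + 1)) ^ (p ^ m) = α * x ^ (p ^ m + 1) := by
    intro x
    rw [mul_pow, hα]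
    congr 1
    rw [← pow_mul, show (p ^ m + 1) * p ^ m = p ^ n + p ^ m by
        rw [hn, show 2 * m = m + m by ring, pow_add]; ring,
      pow_add, hxq, ← pow_succ']
  -- key scaling identity
  have key : ∀ (c : F) (t : ZMod p), c ^ (p ^ m + 1) = A t → c ^ (p ^ k + 1) = A t →
      ∀ x : F, f (c * x) = t * f x := by
    intro c t hc1 hc2 x
    have hAt : (A t) ^ p = A t := by rw [← map_pow, ZMod.pow_card]
    have e1 : α * (c * x) ^ (p ^ m + 1) = A t * (α * x ^ (p ^ m + 1)) := by
      rw [mul_pow, hc1]; ring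
    have e2 : trSum p 1 m (α * (c * x) ^ (p ^ m + 1))
        = A t * trSum p 1 m (α * x ^ (p ^ m + 1)) := by
      rw [e1, trSum_mul_prime p m _ _ hAt]
    obtain ⟨s1, hs1⟩ := exists_algebraMap_of_pow p hp (trSum p 1 m (α * x ^ (p ^ m + 1)))
      (trSum_pow_p p hp m _ (hw_m x))
    have e3 : fToZMod p (trSum p 1 m (α * (c * x) ^ (p ^ m + 1)))
        = t * fToZMod p (trSum p 1 m (α * x ^ (p ^ m + 1))) := by
      rw [e2, ← hs1, ← map_mul, fToZMod_algebraMap p hp, fToZMod_algebraMap p hp]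
    have e4 : β * (c * x) ^ (p ^ k + 1) = A t * (β * x ^ (p ^ k + 1)) := by
      rw [mul_pow, hc2]; ring
    have e5 : trSum p 1 n (β * (c * x) ^ (p ^ k + 1))
        = A t * trSum p 1 n (β * x ^ (p ^ k + 1)) := by
      rw [e4, trSum_mul_prime p n _ _ hAt]
    obtain ⟨s2, hs2⟩ := exists_algebraMap_of_pow p hp (trSum p 1 n (β * x ^ (p ^ k + 1)))
      (trSum_pow_p p hp n _ (hxq _))
    have e6 : fToZMod p (trSum p 1 n (β * (c * x) ^ (p ^ k + 1)))
        = t * fToZMod p (trSum p 1 n (β * x ^ (p ^ k + 1))) := by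
      rw [e5, ← hs2, ← map_mul, fToZMod_algebraMap p hp, fToZMod_algebraMap p hp]
    show fToZMod p (trSum p 1 m (α * (c * x) ^ (p ^ m + 1))) +
        fToZMod p (trSum p 1 n (β * (c * x) ^ (p ^ k + 1))) = t * f x
    rw [e3, e6, hf]
    ring
  -- cyclic group setup
  obtain ⟨g, hg⟩ := IsCyclic.exists_generator (α := Fˣ)
  have hcardU : Fintype.card Fˣ = N := by
    rw [hNdef, ← Fintype.card_units (α := F)]
  have hordg : orderOf g = N := by
    rw [orderOf_eq_card_of_forall_mem_zpowers hg, Nat.card_eq_fintype_card, hcardU]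
  have hgN : g ^ N = 1 := by rw [← hordg]; exact pow_orderOf_eq_one g
  have hpd1_pos : 0 < p ^ d - 1 := by omega
  -- existence of scaling elements
  have exists_c : ∀ t : ZMod p, t ≠ 0 →
      ∃ c : F, c ≠ 0 ∧ c ^ (p ^ m + 1) = A t ∧ c ^ (p ^ k + 1) = A t := by
    intro t ht
    have htF : A t ≠ 0 := by
      intro h
      exact ht ((algebraMap (ZMod p) F).injective (by rw [← hA, h, map_zero]))
    set th : Fˣ := Units.mk0 (A t) htF with hth
    have ht1 : th ^ (p - 1) = 1 := by
      ext
      rw [Units.val_pow_eq_pow_val, hth, Units.val_mk0, Units.val_one, ← map_pow,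
        ZMod.pow_card_sub_one_eq_one ht, map_one]
    have ht2 : th ^ (p ^ d - 1) = 1 := by
      obtain ⟨s, hs⟩ : (p - 1) ∣ (p ^ d - 1) := by
        have := Nat.sub_dvd_pow_sub_pow p 1 d
        rwa [one_pow] at this
      rw [hs, pow_mul, ht1, one_pow]
    obtain ⟨a, ha⟩ : ∃ a : ℕ, g ^ a = th := by
      have h1 : th ∈ Subgroup.zpowers g := hg th
      rw [← mem_powers_iff_mem_zpowers] at h1
      exact (Submonoid.mem_powers_iff th g).mp h1
    set E : ℕ := N / (p ^ d - 1) with hEdef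
    have hE : E * (p ^ d - 1) = N := Nat.div_mul_cancel hdvd_d1
    have hga1 : g ^ (a * (p ^ d - 1)) = 1 := by rw [pow_mul, ha, ht2]
    obtain ⟨j, hj⟩ : N ∣ a * (p ^ d - 1) := hordg ▸ orderOf_dvd_of_pow_eq_one hga1
    have haEj : a = E * j := by
      apply Nat.eq_of_mul_eq_mul_right hpd1_pos
      rw [hj, ← hE]; ring
    set M : ℕ := N / (p ^ (2 * d) - 1) with hMdef
    have hM : M * (p ^ (2 * d) - 1) = N := Nat.div_mul_cancel hdvd2dn
    have hME : M * (p ^ d + 1) = E := by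
      apply Nat.eq_of_mul_eq_mul_right hpd1_pos
      calc M * (p ^ d + 1) * (p ^ d - 1) = M * ((p ^ d + 1) * (p ^ d - 1)) := by ring
        _ = M * (p ^ (2 * d) - 1) := by rw [← hfact]
        _ = N := hM
        _ = E * (p ^ d - 1) := hE.symm
    set c0 : Fˣ := g ^ (j * M) with hc0
    have hc0_1 : c0 ^ (p ^ d + 1) = th := by
      rw [hc0, ← pow_mul, show j * M * (p ^ d + 1) = a by rw [mul_assoc, hME, haEj]; ring, ha]
    have hc0_2 : c0 ^ (p ^ (2 * d) - 1) = 1 := by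
      rw [hc0, ← pow_mul, show j * M * (p ^ (2 * d) - 1) = N * j by rw [mul_assoc, hM]; ring,
        pow_mul, hgN, one_pow]
    have hcv1 : (c0 : F) ^ (p ^ d + 1) = A t := by
      have := congrArg Units.val hc0_1
      rwa [Units.val_pow_eq_pow_val, hth, Units.val_mk0] at this
    have hcv2 : (c0 : F) ^ (p ^ (2 * d) - 1) = 1 := by
      have := congrArg Units.val hc0_2
      rwa [Units.val_pow_eq_pow_val, Units.val_one] at this
    obtain ⟨h1, h2⟩ := lift (c0 : F) (A t) hcv1 hcv2
    exact ⟨(c0 : F), c0.ne_zero, h1, h2⟩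
  -- element of order e
  set u0 : Fˣ := g ^ (N / e) with hu0
  have hNe_dvd : (N / e) ∣ N := Nat.div_dvd_of_dvd he_dvdN
  have hordu : orderOf u0 = e := by
    rw [hu0, orderOf_pow, hordg, Nat.gcd_eq_right hNe_dvd, Nat.div_div_self he_dvdN hN_pos.ne']
  have hu0e : u0 ^ e = 1 := by rw [← hordu]; exact pow_orderOf_eq_one u0
  set v : F := (u0 : F) with hv
  have hv_e : v ^ e = 1 := by
    have := congrArg Units.val hu0e
    rwa [Units.val_pow_eq_pow_val, Units.val_one] at this
  have hv2d : v ^ (p ^ (2 * d) - 1) = 1 := by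
    rw [hfact, pow_mul, hv_e, one_pow]
  obtain ⟨hvm, hvk⟩ := lift v 1 (by rw [← he, hv_e]) hv2d
  have hkey_v : ∀ x : F, f (v * x) = f x := by
    intro x
    have := key v 1 (by rw [map_one]; exact hvm) (by rw [map_one]; exact hvk) x
    rwa [one_mul] at this
  have hinj : ∀ a b : ℕ, a < e → b < e → v ^ a = v ^ b → a = b := by
    intro a b ha hb hab
    have h1 : u0 ^ a = u0 ^ b := by
      apply Units.ext
      rwa [Units.val_pow_eq_pow_val, Units.val_pow_eq_pow_val]
    exact pow_injOn_Iio_orderOf (by rw [hordu]; exact ha) (by rw [hordu]; exact hb) h1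
  -- fiber counts
  set Nc : ZMod p → ℕ := fun c => (Finset.univ.filter (fun x : F => f x = c)).card with hNc
  have hf0 : f (0 : F) = 0 := by
    have htz : ∀ r : ℕ, trSum p 1 r (0 : F) = 0 := by
      intro r
      simp only [trSum]
      apply Finset.sum_eq_zero
      intro i _
      exact zero_pow (by positivity)
    have hz : fToZMod p (0 : F) = 0 := by
      rw [← map_zero A, hA, fToZMod_algebraMap p hp]
    rw [hf]
    simp only [zero_pow (by positivity : p ^ m + 1 ≠ 0), zero_pow (by positivity : p ^ k + 1 ≠ 0),
      mul_zero, htz, hz, add_zero]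
  have he_pos : 0 < e := by omega
  have hNc0_pos : 0 < Nc 0 := by
    rw [hNc]
    refine Finset.card_pos.mpr ⟨0, ?_⟩
    simp [hf0]
  have hdvd_c : ∀ c : ZMod p, c ≠ 0 → e ∣ Nc c := by
    intro c hc
    apply coset_dvd v e he_pos hv_e hinj
    · intro x hx
      rw [Finset.mem_filter] at hx
      intro h0
      rw [h0, hf0] at hx
      exact hc hx.2.symm
    · intro x hx
      rw [Finset.mem_filter] at hx ⊢
      exact ⟨Finset.mem_univ _, by rw [hkey_v x, hx.2]⟩
  have hdvd_0 : e ∣ Nc 0 - 1 := by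
    have h1 : ((Finset.univ.filter (fun x : F => f x = 0)).erase 0).card = Nc 0 - 1 := by
      rw [Finset.card_erase_of_mem (by simp [hf0]), hNc]
    rw [← h1]
    apply coset_dvd v e he_pos hv_e hinj
    · intro x hx
      exact (Finset.mem_erase.mp hx).1
    · intro x hx
      obtain ⟨hx0, hxf⟩ := Finset.mem_erase.mp hx
      rw [Finset.mem_filter] at hxf
      refine Finset.mem_erase.mpr ⟨?_, ?_⟩
      · have hvne : v ≠ 0 := u0.ne_zero
        exact mul_ne_zero hvne hx0
      · rw [Finset.mem_filter]
        exact ⟨Finset.mem_univ _, by rw [hkey_v x, hxf.2]⟩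
  -- all nonzero fibers are equal
  have hmono : ∀ (t : ZMod p), t ≠ 0 → ∀ c : ZMod p, Nc c ≤ Nc (t * c) := by
    intro t ht c
    obtain ⟨ct, hct0, h1, h2⟩ := exists_c t ht
    rw [hNc]
    apply Finset.card_le_card_of_injOn (fun x => ct * x)
    · intro x hx
      rw [Finset.mem_coe, Finset.mem_filter] at hx ⊢
      exact ⟨Finset.mem_univ _, by rw [key ct t h1 h2 x, hx.2]⟩
    · intro x _ y _ hxy
      exact mul_left_cancel₀ hct0 hxy
  have hNceq : ∀ c : ZMod p, c ≠ 0 → Nc c = Nc 1 := by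
    intro c hc
    have h1 : Nc 1 ≤ Nc c := by
      have := hmono c hc 1
      rwa [mul_one] at this
    have h2 : Nc c ≤ Nc 1 := by
      have := hmono c⁻¹ (inv_ne_zero hc) c
      rwa [inv_mul_cancel₀ hc] at this
    omega
  -- expressing the sum via fibers
  have hfib : Tsum p m n k F α β = ∑ c : ZMod p, (Nc c : ℂ) * expChar p c := by
    rw [hTf, ← Finset.sum_fiberwise_of_maps_to (fun x _ => Finset.mem_univ (f x))
      (fun x => expChar p (f x))]
    refine Finset.sum_congr rfl fun c _ => ?_
    rw [Finset.sum_congr rfl (fun x hx => by rw [(Finset.mem_filter.mp hx).2]),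
      Finset.sum_const, nsmul_eq_mul, hNc]
  -- conclude
  have hsplit : ∑ c : ZMod p, (Nc c : ℂ) * expChar p c
      = (Nc 0 : ℂ) * expChar p 0 + ∑ c ∈ Finset.univ.erase 0, (Nc c : ℂ) * expChar p c :=
    (Finset.add_sum_erase _ _ (Finset.mem_univ 0)).symm
  have herase2 : ∑ c ∈ Finset.univ.erase 0, expChar p c = -1 := by
    have h1 : expChar p 0 + ∑ c ∈ Finset.univ.erase 0, expChar p c = ∑ c : ZMod p, expChar p c :=
      Finset.add_sum_erase _ _ (Finset.mem_univ 0)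
    rw [expChar_sum p hp, expChar_zero p] at h1
    linear_combination h1
  have herase : ∑ c ∈ Finset.univ.erase 0, (Nc c : ℂ) * expChar p c = -(Nc 1 : ℂ) := by
    rw [Finset.sum_congr rfl (fun c hc => by
      rw [hNceq c (Finset.mem_erase.mp hc).1]), ← Finset.mul_sum, herase2]
    ring
  obtain ⟨a0, ha0⟩ := hdvd_0
  obtain ⟨b0, hb0⟩ := hdvd_c 1 one_ne_zero
  have hNc0 : Nc 0 = 1 + e * a0 := by omega
  refine ⟨(a0 : ℤ) - (b0 : ℤ), ?_⟩
  rw [hfib, hsplit, herase, expChar_zero p, hNc0, hb0, he]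
  push_cast
  ring
end
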